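/- arXiv:1303.0822 — 6 statements merged into one kernel-verified Lean document; each statement's English description precedes it below -/
import Mathlib

section
/- Under the above hypotheses, w is (1−γ, γ)-irregular for every γ ∈ (0,1); that is, sup_{a∈ℝ} sup_{0≤s<t≤T} (1+|a|)^{1−γ} |Φ^w_{s,t}(a)| / |t−s|^γ < ∞. -/
open MeasureTheory Complex

/-- Under the hypotheses of Statement 0 (w twice continuously
differentiable, `inf |w'| > 0`, `w''/(w')²` integrable), the path `w` is
`(1-γ, γ)`-irregular for every `γ ∈ (0,1)`: the weighted supremum of the
oscillatory integrals `Φ^w_{s,t}(a) = ∫_s^t e^{iaw_r} dr` is finite. -/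
theorem stmt_1 (T : ℝ) (hT : 0 < T) (w w' w'' : ℝ → ℝ)
    (hw : ∀ t ∈ Set.Icc (0:ℝ) T, HasDerivAt w (w' t) t)
    (hw' : ∀ t ∈ Set.Icc (0:ℝ) T, HasDerivAt w' (w'' t) t)
    (hw'cont : ContinuousOn w' (Set.Icc 0 T))
    (hw''cont : ContinuousOn w'' (Set.Icc 0 T))
    (c : ℝ) (hc : 0 < c) (hcw : ∀ t ∈ Set.Icc (0:ℝ) T, c ≤ |w' t|)
    (hint : IntegrableOn (fun σ => w'' σ / (w' σ)^2) (Set.Icc 0 T))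
    (γ : ℝ) (hγ0 : 0 < γ) (hγ1 : γ < 1) :
    ∃ C : ℝ, ∀ a : ℝ, ∀ s t : ℝ, 0 ≤ s → s < t → t ≤ T →
      (1 + |a|) ^ (1 - γ) *
        ‖∫ r in s..t, Complex.exp (Complex.I * a * (w r))‖ ≤
      C * (t - s) ^ γ := by
  have hw'ne : ∀ r ∈ Set.Icc (0:ℝ) T, w' r ≠ 0 := by
    intro r hr h
    have := hcw r hr
    rw [h, abs_zero] at this
    linarith
  have hwc : ContinuousOn w (Set.Icc 0 T) :=
    fun r hr => (hw r hr).continuousAt.continuousWithinAt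
  obtain ⟨M, hM⟩ := isCompact_Icc.exists_bound_of_continuousOn
    (hw''cont.div (hw'cont.pow 2) (fun r hr => pow_ne_zero 2 (hw'ne r hr)))
  have hM0 : 0 ≤ M := le_trans (norm_nonneg _) (hM 0 ⟨le_refl 0, hT.le⟩)
  set K : ℝ := 2 / c + M * T with hK
  have hK0 : 0 < K := by positivity
  have hexp1 : ∀ x : ℝ, ‖Complex.exp (Complex.I * x)‖ = 1 := by
    intro x; rw [mul_comm]; exact Complex.norm_exp_ofReal_mul_I x
  have hexp1' : ∀ (a : ℝ) (r : ℝ), ‖Complex.exp (Complex.I * a * w r)‖ = 1 := by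
    intro a r
    have : (Complex.I * a * w r : ℂ) = Complex.I * ((a * w r : ℝ) : ℂ) := by
      push_cast; ring
    rw [this, hexp1]
  have triv : ∀ (a : ℝ) (s t : ℝ), s < t →
      ‖∫ r in s..t, Complex.exp (Complex.I * a * (w r))‖ ≤ t - s := by
    intro a s t hst
    have := intervalIntegral.norm_integral_le_of_norm_le_const
      (C := 1) (a := s) (b := t) (f := fun r => Complex.exp (Complex.I * a * (w r)))
      (fun x _ => le_of_eq (hexp1' a x))
    rwa [one_mul, abs_of_pos (by linarith)] at this
  have key : ∀ (a : ℝ), a ≠ 0 → ∀ (s t : ℝ), 0 ≤ s → s < t → t ≤ T →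
      ‖∫ r in s..t, Complex.exp (Complex.I * a * (w r))‖ ≤ K / |a| := by
    intro a ha s t hs hst htT
    have habs : (0:ℝ) < |a| := abs_pos.mpr ha
    have hsub : Set.uIcc s t ⊆ Set.Icc 0 T := by
      rw [Set.uIcc_of_le hst.le]; exact Set.Icc_subset_Icc hs htT
    have haC : (a : ℂ) ≠ 0 := Complex.ofReal_ne_zero.mpr ha
    set F : ℝ → ℂ := fun r => Complex.exp (Complex.I * a * w r) / (Complex.I * a * w' r) with hF
    set G : ℝ → ℂ := fun r =>
      Complex.exp (Complex.I * a * w r) * (w'' r) / (Complex.I * a * ((w' r : ℂ))^2) with hG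
    have hFd : ∀ x ∈ Set.uIcc s t,
        HasDerivAt F (Complex.exp (Complex.I * a * w x) - G x) x := by
      intro x hx
      have hx' : x ∈ Set.Icc (0:ℝ) T := hsub hx
      have hg : HasDerivAt (fun r => Complex.I * a * (w r : ℂ))
          (Complex.I * a * (w' x : ℂ)) x :=
        ((hw x hx').ofReal_comp).const_mul (Complex.I * a)
      have hexp : HasDerivAt (fun r => Complex.exp (Complex.I * a * (w r : ℂ)))
          (Complex.exp (Complex.I * a * w x) * (Complex.I * a * (w' x : ℂ))) x := hg.cexp
      have hh : HasDerivAt (fun r => Complex.I * a * (w' r : ℂ))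
          (Complex.I * a * (w'' x : ℂ)) x :=
        ((hw' x hx').ofReal_comp).const_mul (Complex.I * a)
      have hne : Complex.I * a * (w' x : ℂ) ≠ 0 :=
        mul_ne_zero (mul_ne_zero Complex.I_ne_zero haC)
          (Complex.ofReal_ne_zero.mpr (hw'ne x hx'))
      have := hexp.div hh hne
      convert this using 1
      · rfl
      · rfl
      have hwne : ((w' x : ℂ)) ≠ 0 := Complex.ofReal_ne_zero.mpr (hw'ne x hx')
      simp only [hG]
      field_simp
    have hGcont : ContinuousOn G (Set.uIcc s t) := by
      apply ContinuousOn.div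
      · exact ((Complex.continuous_exp.comp
          ((continuous_const.mul (Complex.continuous_ofReal)).comp continuous_id)).comp_continuousOn
            (hwc.mono hsub)).mul ((Complex.continuous_ofReal.comp_continuousOn (hw''cont.mono hsub)))
      · exact (continuous_const.continuousOn).mul
          (((Complex.continuous_ofReal.comp_continuousOn (hw'cont.mono hsub)).pow 2))
      · intro x hx
        exact mul_ne_zero (mul_ne_zero Complex.I_ne_zero haC)
          (pow_ne_zero 2 (Complex.ofReal_ne_zero.mpr (hw'ne x (hsub hx))))
    have hEcont : ContinuousOn (fun r => Complex.exp (Complex.I * a * (w r : ℂ))) (Set.uIcc s t) :=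
      Complex.continuous_exp.comp_continuousOn
        ((continuous_const.continuousOn).mul (Complex.continuous_ofReal.comp_continuousOn (hwc.mono hsub)))
    have hEint : IntervalIntegrable (fun r => Complex.exp (Complex.I * a * (w r : ℂ))) volume s t :=
      hEcont.intervalIntegrable
    have hGint : IntervalIntegrable G volume s t := hGcont.intervalIntegrable
    have heq : (∫ r in s..t, (Complex.exp (Complex.I * a * (w r : ℂ)) - G r)) = F t - F s :=
      intervalIntegral.integral_eq_sub_of_hasDerivAt hFd (hEint.sub hGint)
    rw [intervalIntegral.integral_sub hEint hGint, sub_eq_iff_eq_add] at heq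
    rw [heq]
    have hFnorm : ∀ r ∈ Set.Icc (0:ℝ) T, ‖F r‖ ≤ 1 / (|a| * c) := by
      intro r hr
      rw [hF]
      simp only [norm_div, hexp1' a r, norm_mul, Complex.norm_I, one_mul,
        Complex.norm_real, Real.norm_eq_abs]
      rw [one_div, one_div]
      exact inv_anti₀ (by positivity)
        (mul_le_mul_of_nonneg_left (hcw r hr) (abs_nonneg a))
    have hGnorm : ∀ x ∈ Set.uIoc s t, ‖G x‖ ≤ M / |a| := by
      intro x hx
      have hx' : x ∈ Set.Icc (0:ℝ) T := hsub (Set.uIoc_subset_uIcc hx)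
      have hwp : (0:ℝ) < |w' x| := abs_pos.mpr (hw'ne x hx')
      have h1 : |w'' x| ≤ M * |w' x|^2 := by
        have h := hM x hx'
        rw [Pi.div_apply, Pi.pow_apply, Real.norm_eq_abs, abs_div, _root_.abs_pow] at h
        exact (div_le_iff₀ (by positivity)).mp h
      rw [hG]
      simp only [norm_div, norm_mul, hexp1' a x, one_mul, Complex.norm_I,
        Complex.norm_real, Real.norm_eq_abs, norm_pow]
      rw [div_le_div_iff₀ (by positivity) habs]
      nlinarith [mul_le_mul_of_nonneg_right h1 habs.le]
    have hGIbound : ‖∫ r in s..t, G r‖ ≤ M / |a| * (t - s) := by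
      have h := intervalIntegral.norm_integral_le_of_norm_le_const hGnorm
      rwa [abs_of_pos (show (0:ℝ) < t - s by linarith)] at h
    have hsIcc : s ∈ Set.Icc (0:ℝ) T := ⟨hs, by linarith⟩
    have htIcc : t ∈ Set.Icc (0:ℝ) T := ⟨by linarith, htT⟩
    calc ‖F t - F s + ∫ r in s..t, G r‖
        ≤ ‖F t - F s‖ + ‖∫ r in s..t, G r‖ := norm_add_le _ _
      _ ≤ (‖F t‖ + ‖F s‖) + M / |a| * (t - s) :=
          add_le_add (norm_sub_le _ _) hGIbound
      _ ≤ (1 / (|a| * c) + 1 / (|a| * c)) + M / |a| * T := by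
          have e1 := hFnorm t htIcc
          have e2 := hFnorm s hsIcc
          have e3 : M / |a| * (t - s) ≤ M / |a| * T :=
            mul_le_mul_of_nonneg_left (by linarith) (by positivity)
          linarith
      _ = K / |a| := by
          rw [hK]
          field_simp
          ring
  -- final combination
  refine ⟨max ((2:ℝ) ^ (1 - γ) * T ^ (1 - γ)) ((2 * K) ^ (1 - γ)), ?_⟩
  intro a s t hs hst htT
  have hδ : (0:ℝ) < t - s := by linarith
  have hδT : t - s ≤ T := by linarith
  have h1γ : (0:ℝ) ≤ 1 - γ := by linarith
  have hx0 : (0:ℝ) ≤ ‖∫ r in s..t, Complex.exp (Complex.I * a * (w r))‖ := norm_nonneg _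
  set x := ‖∫ r in s..t, Complex.exp (Complex.I * a * (w r))‖ with hxdef
  have h2 : x ≤ t - s := triv a s t hst
  rcases le_total |a| 1 with hA | hA
  · have h1 : (1 + |a|) ^ (1 - γ) ≤ (2:ℝ) ^ (1 - γ) :=
      Real.rpow_le_rpow (by positivity) (by linarith) h1γ
    have h3 : (t - s) = (t - s) ^ (1 - γ) * (t - s) ^ γ := by
      rw [← Real.rpow_add hδ]
      norm_num
    have h4 : (t - s) ^ (1 - γ) ≤ T ^ (1 - γ) := Real.rpow_le_rpow hδ.le hδT h1γ
    calc (1 + |a|) ^ (1 - γ) * x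
        ≤ (2:ℝ) ^ (1 - γ) * ((t - s) ^ (1 - γ) * (t - s) ^ γ) := by
          rw [← h3]
          exact mul_le_mul h1 h2 hx0 (by positivity)
      _ ≤ (2:ℝ) ^ (1 - γ) * (T ^ (1 - γ) * (t - s) ^ γ) :=
          mul_le_mul_of_nonneg_left
            (mul_le_mul_of_nonneg_right h4 (by positivity)) (by positivity)
      _ = ((2:ℝ) ^ (1 - γ) * T ^ (1 - γ)) * (t - s) ^ γ := by ring
      _ ≤ max ((2:ℝ) ^ (1 - γ) * T ^ (1 - γ)) ((2 * K) ^ (1 - γ)) * (t - s) ^ γ :=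
          mul_le_mul_of_nonneg_right (le_max_left _ _) (by positivity)
  · have ha0 : a ≠ 0 := by
      intro h; rw [h, abs_zero] at hA; linarith
    have habs : (0:ℝ) < |a| := abs_pos.mpr ha0
    have h5 : x ≤ K / |a| := key a ha0 s t hs hst htT
    have hxsplit : x ≤ (K / |a|) ^ (1 - γ) * (t - s) ^ γ := by
      rcases eq_or_lt_of_le hx0 with h | h
      · rw [← h]; positivity
      · calc x = x ^ (1 - γ) * x ^ γ := by
              rw [← Real.rpow_add h]; norm_num
          _ ≤ (K / |a|) ^ (1 - γ) * (t - s) ^ γ :=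
              mul_le_mul (Real.rpow_le_rpow hx0 h5 h1γ) (Real.rpow_le_rpow hx0 h2 hγ0.le)
                (by positivity) (by positivity)
    have h6 : (1 + |a|) ^ (1 - γ) ≤ (2 * |a|) ^ (1 - γ) :=
      Real.rpow_le_rpow (by positivity) (by linarith) h1γ
    calc (1 + |a|) ^ (1 - γ) * x
        ≤ (2 * |a|) ^ (1 - γ) * ((K / |a|) ^ (1 - γ) * (t - s) ^ γ) :=
          mul_le_mul h6 hxsplit hx0 (by positivity)
      _ = ((2 * |a|) * (K / |a|)) ^ (1 - γ) * (t - s) ^ γ := by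
          rw [← mul_assoc, ← Real.mul_rpow (by positivity) (by positivity)]
      _ = (2 * K) ^ (1 - γ) * (t - s) ^ γ := by
          rw [show (2 * |a|) * (K / |a|) = 2 * K by field_simp]
      _ ≤ max ((2:ℝ) ^ (1 - γ) * T ^ (1 - γ)) ((2 * K) ^ (1 - γ)) * (t - s) ^ γ :=
          mul_le_mul_of_nonneg_right (le_max_right _ _) (by positivity)
end

section
/- Let w:[0,T]→ℝ be δ-Hölder continuous with T>0. If γ,ρ>0 satisfy γ+δ>1 and ρ>(1−γ)/δ, then w is not (ρ,γ)-irregular, i.e. ‖Φ^w‖_{W^{ρ,γ}_T} = +∞. -/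
open MeasureTheory Complex

/-- A `δ`-Hölder function `w` on `[0,T]` is not `(ρ,γ)`-irregular
when `γ + δ > 1` and `ρ > (1-γ)/δ`: the irregularity norm
`sup_a sup_{s<t} (1+|a|)^ρ |Φ^w_{s,t}(a)|/|t-s|^γ` is infinite, i.e. no finite
constant `C` dominates it. -/
theorem stmt_2 (T : ℝ) (hT : 0 < T) (w : ℝ → ℝ) (δ : ℝ) (hδ : 0 < δ)
    (Chol : ℝ)
    (hHolder : ∀ s ∈ Set.Icc (0:ℝ) T, ∀ t ∈ Set.Icc (0:ℝ) T,
      |w t - w s| ≤ Chol * |t - s| ^ δ)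
    (γ ρ : ℝ) (hγ : 0 < γ) (hρ : 0 < ρ)
    (hγδ : 1 < γ + δ) (hρδ : (1 - γ) / δ < ρ) :
    ¬ ∃ C : ℝ, ∀ a : ℝ, ∀ s t : ℝ, 0 ≤ s → s < t → t ≤ T →
      (1 + |a|) ^ ρ *
        ‖∫ r in s..t, Complex.exp (Complex.I * a * (w r))‖ ≤
      C * (t - s) ^ γ := by
  rintro ⟨C, hC⟩
  set c1 : ℝ := Real.cos 1 with hc1def
  have hc1 : 0 < c1 := by
    apply Real.cos_pos_of_mem_Ioo
    constructor <;> [linarith [Real.pi_gt_three]; linarith [Real.pi_gt_three]]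
  set K : ℝ := max Chol 1 with hKdef
  have hK1 : (1:ℝ) ≤ K := le_max_right _ _
  have hK0 : (0:ℝ) < K := lt_of_lt_of_le one_pos hK1
  set C' : ℝ := max C 1 with hC'def
  have hC'0 : (0:ℝ) < C' := lt_of_lt_of_le one_pos (le_max_right _ _)
  have he : 0 < δ * ρ + γ - 1 := by
    have := (div_lt_iff₀ hδ).mp hρδ
    nlinarith
  set e : ℝ := δ * ρ + γ - 1 with hedef
  set M : ℝ := C' * K ^ ρ / c1 with hMdef
  have hM : 0 < M := by positivity
  set h0 : ℝ := ((2*M)⁻¹) ^ e⁻¹ with hh0def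
  have hh00 : 0 < h0 := Real.rpow_pos_of_pos (by positivity) _
  set h : ℝ := min T h0 with hhdef
  have hh : 0 < h := lt_min hT hh00
  have hhT : h ≤ T := min_le_left _ _
  have hHK : ∀ s ∈ Set.Icc (0:ℝ) T, ∀ t ∈ Set.Icc (0:ℝ) T,
      |w t - w s| ≤ K * |t - s| ^ δ := by
    intro s hs t ht
    exact (hHolder s hs t ht).trans
      (mul_le_mul_of_nonneg_right (le_max_left _ _) (Real.rpow_nonneg (abs_nonneg _) _))
  -- continuity of w on [0,T]
  have hwc : ContinuousOn w (Set.Icc 0 T) := by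
    intro s hs
    have hcont : ContinuousAt (fun t : ℝ => K * |t - s| ^ δ) s := by
      have h2 : ContinuousAt (fun t : ℝ => |t - s|) s := by fun_prop
      exact continuousAt_const.mul (h2.rpow_const (Or.inr hδ.le))
    have h0' : Filter.Tendsto (fun t => K * |t - s| ^ δ) (nhdsWithin s (Set.Icc 0 T)) (nhds 0) := by
      have hv : K * |s - s| ^ δ = 0 := by simp [Real.zero_rpow hδ.ne']
      have := hcont.tendsto.mono_left (nhdsWithin_le_nhds (s := Set.Icc 0 T))
      rwa [hv] at this
    have htd : Filter.Tendsto (fun t => dist (w t) (w s)) (nhdsWithin s (Set.Icc 0 T)) (nhds 0) := by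
      apply squeeze_zero' (Filter.Eventually.of_forall fun t => dist_nonneg) ?_ h0'
      filter_upwards [self_mem_nhdsWithin] with t ht
      rw [Real.dist_eq]
      exact hHK s hs t ht
    rw [ContinuousWithinAt, tendsto_iff_dist_tendsto_zero]
    exact htd
  set a : ℝ := h ^ (-δ) / K with hadef
  have ha : 0 < a := div_pos (Real.rpow_pos_of_pos hh _) hK0
  set g : ℝ → ℝ := fun r => a * (w r - w 0) with hgdef
  have hsub : Set.Icc (0:ℝ) h ⊆ Set.Icc 0 T := Set.Icc_subset_Icc le_rfl hhT
  have hgb : ∀ r ∈ Set.Icc (0:ℝ) h, |g r| ≤ 1 := by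
    intro r hr
    have hrT : r ∈ Set.Icc (0:ℝ) T := hsub hr
    have h1 : |w r - w 0| ≤ K * r ^ δ := by
      have := hHK 0 ⟨le_rfl, hT.le⟩ r hrT
      rwa [sub_zero, _root_.abs_of_nonneg hr.1] at this
    have h2 : r ^ δ ≤ h ^ δ := Real.rpow_le_rpow hr.1 hr.2 hδ.le
    have h3 : |g r| ≤ a * (K * h ^ δ) := by
      rw [hgdef]
      simp only []
      rw [abs_mul, abs_of_pos ha]
      exact mul_le_mul_of_nonneg_left (h1.trans (by nlinarith)) ha.le
    refine h3.trans (le_of_eq ?_)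
    calc a * (K * h ^ δ) = (h ^ (-δ) * h ^ δ) * (K⁻¹ * K) := by
          rw [hadef, div_eq_mul_inv]; ring
      _ = 1 := by
          rw [← Real.rpow_add hh, neg_add_cancel, Real.rpow_zero,
            inv_mul_cancel₀ hK0.ne', mul_one]
  have hwch : ContinuousOn w (Set.Icc 0 h) := hwc.mono hsub
  have hgc : ContinuousOn g (Set.Icc 0 h) :=
    continuousOn_const.mul (hwch.sub continuousOn_const)
  have hJint : IntervalIntegrable (fun r => Complex.exp (Complex.I * (g r : ℂ))) volume 0 h := by
    apply ContinuousOn.intervalIntegrable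
    rw [Set.uIcc_of_le hh.le]
    exact (continuousOn_const.mul (Complex.continuous_ofReal.comp_continuousOn hgc)).cexp
  set J : ℂ := ∫ r in (0:ℝ)..h, Complex.exp (Complex.I * (g r : ℂ)) with hJdef
  have hre : J.re = ∫ r in (0:ℝ)..h, Real.cos (g r) := by
    have := (ContinuousLinearMap.intervalIntegral_comp_comm Complex.reCLM hJint)
    rw [hJdef]
    rw [show (Complex.reCLM (∫ r in (0:ℝ)..h, Complex.exp (Complex.I * (g r : ℂ))) : ℝ)
        = (∫ r in (0:ℝ)..h, Complex.exp (Complex.I * (g r : ℂ))).re from rfl] at this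
    rw [← this]
    apply intervalIntegral.integral_congr
    intro r _
    show Complex.reCLM _ = _
    simp only [Complex.reCLM_apply]
    rw [show Complex.I * (g r : ℂ) = (g r : ℂ) * Complex.I from mul_comm _ _]
    exact Complex.exp_ofReal_mul_I_re _
  have hcosint : IntervalIntegrable (fun r => Real.cos (g r)) volume 0 h := by
    apply ContinuousOn.intervalIntegrable
    rw [Set.uIcc_of_le hh.le]
    exact Real.continuous_cos.comp_continuousOn hgc
  have hlow : c1 * h ≤ J.re := by
    rw [hre]
    have hint : ∫ r in (0:ℝ)..h, c1 ≤ ∫ r in (0:ℝ)..h, Real.cos (g r) := by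
      apply intervalIntegral.integral_mono_on hh.le intervalIntegrable_const hcosint
      intro r hr
      have h1 : |g r| ≤ 1 := hgb r hr
      calc c1 = Real.cos 1 := hc1def
        _ ≤ Real.cos |g r| :=
          Real.cos_le_cos_of_nonneg_of_le_pi (abs_nonneg _) (by linarith [Real.pi_gt_three]) h1
        _ = Real.cos (g r) := Real.cos_abs _
    calc c1 * h = ∫ _r in (0:ℝ)..h, c1 := by simp [mul_comm]
      _ ≤ _ := hint
  have hJnorm : c1 * h ≤ ‖J‖ := hlow.trans (by exact Complex.re_le_norm J)
  -- factorization
  have hfac : (∫ r in (0:ℝ)..h, Complex.exp (Complex.I * a * (w r)))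
      = Complex.exp (Complex.I * a * (w 0)) * J := by
    rw [hJdef, ← intervalIntegral.integral_const_mul]
    apply intervalIntegral.integral_congr
    intro r _
    beta_reduce
    rw [← Complex.exp_add]
    congr 1
    rw [hgdef]
    push_cast
    ring
  have hnormeq : ‖∫ r in (0:ℝ)..h, Complex.exp (Complex.I * a * (w r))‖ = ‖J‖ := by
    rw [hfac, norm_mul]
    have : Complex.I * (a:ℂ) * ((w 0 : ℝ):ℂ) = ((a * w 0 : ℝ):ℂ) * Complex.I := by
      push_cast; ring
    rw [this, Complex.norm_exp_ofReal_mul_I, one_mul]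
  -- apply hypothesis
  have key := hC a 0 h le_rfl hh hhT
  rw [sub_zero, hnormeq] at key
  have h1a : a ^ ρ ≤ (1 + |a|) ^ ρ :=
    Real.rpow_le_rpow ha.le (by rw [abs_of_pos ha]; linarith) hρ.le
  have hineq : a ^ ρ * (c1 * h) ≤ C' * h ^ γ := by
    calc a ^ ρ * (c1 * h) ≤ (1 + |a|) ^ ρ * ‖J‖ :=
          mul_le_mul h1a hJnorm (by positivity) (Real.rpow_nonneg (by positivity) _)
      _ ≤ C * h ^ γ := key
      _ ≤ C' * h ^ γ :=
          mul_le_mul_of_nonneg_right (le_max_left _ _) (Real.rpow_nonneg hh.le _)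
  have haρ : a ^ ρ = h ^ (-(δ*ρ)) / K ^ ρ := by
    rw [hadef, Real.div_rpow (Real.rpow_nonneg hh.le _) hK0.le, ← Real.rpow_mul hh.le]
    ring_nf
  have hKρ : (0:ℝ) < K ^ ρ := Real.rpow_pos_of_pos hK0 _
  have hγh : (0:ℝ) < h ^ γ := Real.rpow_pos_of_pos hh _
  have hsplit : h ^ (-(δ*ρ)) * h = h ^ γ * h ^ (-e) := by
    calc h ^ (-(δ*ρ)) * h = h ^ (-(δ*ρ)) * h ^ (1:ℝ) := by rw [Real.rpow_one]
      _ = h ^ (-(δ*ρ) + 1) := (Real.rpow_add hh _ _).symm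
      _ = h ^ (γ + -e) := by rw [hedef]; ring_nf
      _ = h ^ γ * h ^ (-e) := Real.rpow_add hh _ _
  have ineq2 : c1 * (h ^ γ * h ^ (-e)) / K ^ ρ ≤ C' * h ^ γ := by
    calc c1 * (h ^ γ * h ^ (-e)) / K ^ ρ = h ^ (-(δ*ρ)) / K ^ ρ * (c1 * h) := by
          rw [← hsplit]; ring
      _ ≤ C' * h ^ γ := by rw [← haρ]; exact hineq
  rw [div_le_iff₀ hKρ] at ineq2
  have hec : h ^ (-e) ≤ M := by
    have h4 : (c1 * h ^ (-e)) * h ^ γ ≤ (C' * K ^ ρ) * h ^ γ := by nlinarith [ineq2]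
    have h5 : c1 * h ^ (-e) ≤ C' * K ^ ρ := le_of_mul_le_mul_right h4 hγh
    rw [hMdef, le_div_iff₀ hc1]
    linarith
  have hone : (1:ℝ) = h ^ (-e) * h ^ e := by
    rw [← Real.rpow_add hh]; simp
  have heh : h ^ e ≤ (2*M)⁻¹ := by
    calc h ^ e ≤ h0 ^ e := Real.rpow_le_rpow hh.le (min_le_right _ _) he.le
      _ = (2*M)⁻¹ := by
          rw [hh0def, ← Real.rpow_mul (by positivity : (0:ℝ) ≤ (2*M)⁻¹),
            inv_mul_cancel₀ he.ne', Real.rpow_one]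
  have hfin : (1:ℝ) ≤ M * (2*M)⁻¹ := by
    rw [hone]
    exact mul_le_mul hec heh (Real.rpow_nonneg hh.le _) hM.le
  have hMM : M * (2*M)⁻¹ = 2⁻¹ := by
    rw [mul_inv, mul_comm (2:ℝ)⁻¹ M⁻¹, ← mul_assoc, mul_inv_cancel₀ hM.ne', one_mul]
  rw [hMM] at hfin
  norm_num at hfin
end

section
/- There is no Lipschitz continuous function w:[0,T]→ℝ (T>0) that is ρ-irregular for any ρ > 1/2; i.e., if w is Lipschitz and (ρ,γ)-irregular with γ>1/2, then ρ ≤ 1/2. -/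
open MeasureTheory Complex

set_option maxHeartbeats 1000000

/-- No Lipschitz function `w : [0,T] → ℝ` is `ρ`-irregular for
`ρ > 1/2`: if `w` is Lipschitz on `[0,T]` and `(ρ,γ)`-irregular with
`γ > 1/2`, then `ρ ≤ 1/2`. -/
theorem stmt_3 (T : ℝ) (hT : 0 < T) (w : ℝ → ℝ) (L : ℝ)
    (hLip : ∀ s ∈ Set.Icc (0:ℝ) T, ∀ t ∈ Set.Icc (0:ℝ) T,
      |w t - w s| ≤ L * |t - s|)
    (γ ρ : ℝ) (hγ : 1/2 < γ) (hρ : 0 < ρ)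
    (hirr : ∃ C : ℝ, ∀ a : ℝ, ∀ s t : ℝ, 0 ≤ s → s < t → t ≤ T →
      (1 + |a|) ^ ρ *
        ‖∫ r in s..t, Complex.exp (Complex.I * a * (w r))‖ ≤
      C * (t - s) ^ γ) :
    ρ ≤ 1/2 := by
  obtain ⟨C, hC⟩ := hirr
  by_contra hlt
  push_neg at hlt
  set q : ℝ := ρ - 1/2 with hqdef
  have hq0 : 0 < q := by simp [hqdef]; linarith
  set L' : ℝ := max L 1 with hL'def
  have hL'1 : (1:ℝ) ≤ L' := le_max_right _ _
  have hL'0 : (0:ℝ) < L' := by linarith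
  have hLL' : L ≤ L' := le_max_left _ _
  set S : ℝ := L' ^ (1/2 : ℝ) with hSdef
  have hS0 : 0 < S := Real.rpow_pos_of_pos hL'0 _
  set M : ℝ := max (2 * C * S) 1 with hMdef
  have hM1 : (1:ℝ) ≤ M := le_max_right _ _
  have hMC : 2 * C * S ≤ M := le_max_left _ _
  set a : ℝ := max ((2*M) ^ (1/q)) (max (1/(L'*T)) 1) with hadef
  have ha1 : (1:ℝ) ≤ a := le_trans (le_max_right _ _) (le_max_right _ _)
  have ha0 : (0:ℝ) < a := by linarith
  have haM : (2*M) ^ (1/q) ≤ a := le_max_left _ _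
  have haT : 1/(L'*T) ≤ a := le_trans (le_max_left _ _) (le_max_right _ _)
  set ε : ℝ := 1/(L'*a) with hεdef
  have hLa0 : 0 < L' * a := mul_pos hL'0 ha0
  have hε0 : 0 < ε := by positivity
  have hε1 : ε ≤ 1 := by
    rw [hεdef, div_le_one hLa0]; nlinarith
  have hεT : ε ≤ T := by
    rw [hεdef, div_le_iff₀ hLa0]
    rw [div_le_iff₀ (by positivity : 0 < L' * T)] at haT
    nlinarith
  -- continuity of w on [0,T]
  have hwc : ContinuousOn w (Set.Icc 0 T) := by
    have : LipschitzOnWith (Real.toNNReal L') w (Set.Icc 0 T) := by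
      apply LipschitzOnWith.of_dist_le_mul
      intro x hx y hy
      rw [Real.dist_eq, Real.dist_eq, Real.coe_toNNReal _ (by linarith)]
      calc |w x - w y| ≤ L * |x - y| := hLip y hy x hx
        _ ≤ L' * |x - y| := by gcongr
    exact this.continuousOn
  have hsub : Set.Icc (0:ℝ) ε ⊆ Set.Icc 0 T := Set.Icc_subset_Icc le_rfl hεT
  have hwc' : ContinuousOn w (Set.Icc 0 ε) := hwc.mono hsub
  -- pointwise bound |a * (w r - w 0)| ≤ 1 on [0, ε]
  have hbd : ∀ r ∈ Set.Icc (0:ℝ) ε, |a * (w r - w 0)| ≤ 1 := by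
    intro r hr
    have hr0 : 0 ≤ r := hr.1
    have hrε : r ≤ ε := hr.2
    have h1 : |w r - w 0| ≤ L * |r - 0| :=
      hLip 0 ⟨le_rfl, hT.le⟩ r (hsub hr)
    have h2 : |w r - w 0| ≤ L' * ε := by
      rw [sub_zero, _root_.abs_of_nonneg hr0] at h1
      calc |w r - w 0| ≤ L * r := h1
        _ ≤ L' * ε := by nlinarith [abs_nonneg (w r - w 0)]
    rw [abs_mul, abs_of_pos ha0]
    calc a * |w r - w 0| ≤ a * (L' * ε) := by nlinarith
      _ = 1 := by rw [hεdef]; field_simp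
  -- lower bound on the oscillatory integral
  have hgc : ContinuousOn (fun r => Complex.exp (Complex.I * a * (w r - w 0))) (Set.Icc 0 ε) := by
    apply Complex.continuous_exp.comp_continuousOn
    exact continuousOn_const.mul
      ((Complex.continuous_ofReal.comp_continuousOn hwc').sub continuousOn_const)
  have hgint : IntervalIntegrable (fun r => Complex.exp (Complex.I * a * (w r - w 0)))
      volume 0 ε := by
    apply ContinuousOn.intervalIntegrable
    rwa [Set.uIcc_of_le hε0.le]
  have hcosc : ContinuousOn (fun r => Real.cos (a * (w r - w 0))) (Set.Icc 0 ε) :=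
    Real.continuous_cos.comp_continuousOn
      (continuousOn_const.mul (hwc'.sub continuousOn_const))
  have hcosint : IntervalIntegrable (fun r => Real.cos (a * (w r - w 0))) volume 0 ε := by
    apply ContinuousOn.intervalIntegrable
    rwa [Set.uIcc_of_le hε0.le]
  have hre : (∫ r in (0:ℝ)..ε, Complex.exp (Complex.I * a * (w r - w 0))).re
      = ∫ r in (0:ℝ)..ε, Real.cos (a * (w r - w 0)) := by
    have h := Complex.reCLM.intervalIntegral_comp_comm hgint
    simp only [Complex.reCLM_apply] at h
    rw [← h]
    apply intervalIntegral.integral_congr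
    intro r _
    have : Complex.I * a * ((w r : ℂ) - (w 0 : ℂ))
        = ((a * (w r - w 0) : ℝ) : ℂ) * Complex.I := by push_cast; ring
    simp only [this, Complex.exp_ofReal_mul_I_re]
  have hcosge : ε/2 ≤ ∫ r in (0:ℝ)..ε, Real.cos (a * (w r - w 0)) := by
    have : ∫ r in (0:ℝ)..ε, (1/2 : ℝ) ≤ ∫ r in (0:ℝ)..ε, Real.cos (a * (w r - w 0)) := by
      apply intervalIntegral.integral_mono_on hε0.le intervalIntegrable_const hcosint
      intro r hr
      have h1 := hbd r hr
      have h2 : (a * (w r - w 0))^2 ≤ 1 := by nlinarith [abs_nonneg (a * (w r - w 0)), _root_.sq_abs (a * (w r - w 0))]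
      calc (1/2 : ℝ) ≤ 1 - (a * (w r - w 0))^2 / 2 := by linarith
        _ ≤ Real.cos (a * (w r - w 0)) := Real.one_sub_sq_div_two_le_cos
    simpa [div_eq_mul_inv] using this
  have hsplit : ∀ r : ℝ, Complex.exp (Complex.I * a * (w r))
      = Complex.exp (Complex.I * a * (w 0)) * Complex.exp (Complex.I * a * (w r - w 0)) := by
    intro r
    rw [← Complex.exp_add]
    congr 1
    push_cast
    ring
  have hnorm1 : ‖Complex.exp (Complex.I * a * (w 0))‖ = 1 := by
    rw [show Complex.I * (a:ℂ) * ((w 0 : ℝ):ℂ) = ((a * w 0 : ℝ):ℂ) * Complex.I by push_cast; ring,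
      Complex.norm_exp_ofReal_mul_I]
  have hkey : ε/2 ≤ ‖∫ r in (0:ℝ)..ε, Complex.exp (Complex.I * a * (w r))‖ := by
    have heq : (∫ r in (0:ℝ)..ε, Complex.exp (Complex.I * a * (w r)))
        = Complex.exp (Complex.I * a * (w 0)) *
          ∫ r in (0:ℝ)..ε, Complex.exp (Complex.I * a * (w r - w 0)) := by
      rw [← intervalIntegral.integral_const_mul]
      apply intervalIntegral.integral_congr
      intro r _
      exact hsplit r
    rw [heq, norm_mul, hnorm1, one_mul]
    calc ε/2 ≤ (∫ r in (0:ℝ)..ε, Complex.exp (Complex.I * a * (w r - w 0))).re := by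
          rw [hre]; exact hcosge
      _ ≤ ‖∫ r in (0:ℝ)..ε, Complex.exp (Complex.I * a * (w r - w 0))‖ :=
          Complex.re_le_norm _
  -- apply irregularity
  have hCε := hC a 0 ε le_rfl hε0 hεT
  rw [abs_of_pos ha0, sub_zero] at hCε
  have hpa : (0:ℝ) < 1 + a := by linarith
  have hpow_pos : 0 < (1 + a) ^ ρ := Real.rpow_pos_of_pos hpa _
  have hmain : (1 + a) ^ ρ * (ε/2) ≤ C * ε ^ γ :=
    le_trans (by nlinarith) hCε
  have hC0 : 0 < C := by
    by_contra hC0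
    push_neg at hC0
    have h1 : 0 < (1 + a) ^ ρ * (ε/2) := by positivity
    have h2 : C * ε ^ γ ≤ 0 :=
      mul_nonpos_of_nonpos_of_nonneg hC0 (Real.rpow_nonneg hε0.le _)
    linarith
  have hεγ : ε ^ γ ≤ ε ^ (1/2 : ℝ) :=
    Real.rpow_le_rpow_of_exponent_ge hε0 hε1 hγ.le
  -- ε^(1/2) ≤ S * (1+a)^(1/2) * ε
  have hehalf : ε ^ (1/2:ℝ) ≤ S * (1 + a) ^ (1/2:ℝ) * ε := by
    have h1 : ε ^ (1/2:ℝ) = (L' * a) ^ (-(1/2):ℝ) := by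
      rw [hεdef, one_div, ← Real.rpow_neg_one (L'*a), ← Real.rpow_mul hLa0.le]
      norm_num
    have h2 : (L' * a) ^ (-(1/2):ℝ) = (L' * a) ^ (1/2:ℝ) * ε := by
      rw [hεdef]
      rw [show (-(1/2):ℝ) = (1/2) + (-1) by norm_num, Real.rpow_add hLa0,
        Real.rpow_neg_one]
      field_simp
    rw [h1, h2]
    have h3 : (L' * a) ^ (1/2:ℝ) ≤ (L' * (1+a)) ^ (1/2:ℝ) :=
      Real.rpow_le_rpow hLa0.le (by nlinarith) (by norm_num)
    have h4 : (L' * (1+a)) ^ (1/2:ℝ) = S * (1 + a) ^ (1/2:ℝ) := by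
      rw [hSdef, ← Real.mul_rpow hL'0.le hpa.le]
    nlinarith [Real.rpow_nonneg hLa0.le (1/2:ℝ)]
  have hρsplit : (1 + a) ^ ρ = (1 + a) ^ q * (1 + a) ^ (1/2:ℝ) := by
    rw [← Real.rpow_add hpa, hqdef]; ring_nf
  have hhalf_pos : 0 < (1 + a) ^ (1/2:ℝ) := Real.rpow_pos_of_pos hpa _
  -- conclude (1+a)^q ≤ 2*C*S
  have hfinal : (1 + a) ^ q ≤ 2 * C * S := by
    have h1 : (1 + a) ^ q * ((1 + a) ^ (1/2:ℝ) * ε) ≤ 2 * C * S * ((1 + a) ^ (1/2:ℝ) * ε) := by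
      calc (1 + a) ^ q * ((1 + a) ^ (1/2:ℝ) * ε)
          = (1 + a) ^ ρ * ε := by rw [hρsplit]; ring
        _ ≤ 2 * C * ε ^ γ := by nlinarith
        _ ≤ 2 * C * ε ^ (1/2:ℝ) := by nlinarith
        _ ≤ 2 * C * (S * (1 + a) ^ (1/2:ℝ) * ε) := by nlinarith
        _ = 2 * C * S * ((1 + a) ^ (1/2:ℝ) * ε) := by ring
    exact le_of_mul_le_mul_right h1 (by positivity)
  -- but (1+a)^q ≥ 2M > 2*C*S
  have hgt : 2 * M ≤ (1 + a) ^ q := by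
    have h2M1 : (1:ℝ) ≤ 2 * M := by linarith
    calc 2 * M = ((2*M) ^ (1/q:ℝ)) ^ q := by
          rw [← Real.rpow_mul (by linarith : (0:ℝ) ≤ 2*M), one_div,
            inv_mul_cancel₀ hq0.ne', Real.rpow_one]
      _ ≤ a ^ q := Real.rpow_le_rpow (Real.rpow_nonneg (by linarith) _) haM hq0.le
      _ ≤ (1 + a) ^ q := Real.rpow_le_rpow ha0.le (by linarith) hq0.le
  linarith
end

section
/- Conservation law for Young equations: suppose X ∈ C^γ([0,T], Lip_M(V)) with γ>1/2 and that for all φ∈V with ‖φ‖_V ≤ A one has |‖φ + X_{s,t}(φ)‖_V − ‖φ‖_V| ≤ C_A |t−s|^ρ with ρ>1. Then any solution ψ ∈ C^{1/2}([0,T],V) of ψ_t = ψ_0 + ∫_0^t X_{dσ}(ψ_σ) satisfies ‖ψ_t‖_V = ‖ψ_0‖_V for all t∈[0,T]. -/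
open Set

open Filter in
lemma aux_const (g : ℝ → ℝ) (T D1 D2 θ1 θ2 : ℝ) (h1 : 1 < θ1) (h2 : 1 < θ2)
    (h : ∀ s ∈ Icc (0:ℝ) T, ∀ t ∈ Icc (0:ℝ) T, s ≤ t →
      |g t - g s| ≤ D1 * (t - s) ^ θ1 + D2 * (t - s) ^ θ2) :
    ∀ t ∈ Icc (0:ℝ) T, g t = g 0 := by
  intro t ht
  obtain ⟨ht0, htT⟩ := ht
  have key : ∀ n : ℕ, 0 < n →
      |g t - g 0| ≤ D1 * t ^ θ1 * (n:ℝ) ^ (1 - θ1) + D2 * t ^ θ2 * (n:ℝ) ^ (1 - θ2) := by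
    intro n hn
    have hn0 : (0:ℝ) < n := by exact_mod_cast hn
    set u : ℕ → ℝ := fun i => g (i * t / n) with hu
    have hpt : ∀ i : ℕ, i ≤ n → (i * t / n : ℝ) ∈ Icc (0:ℝ) T := by
      intro i hi
      constructor
      · positivity
      · have : (i:ℝ) * t / n ≤ t := by
          rw [div_le_iff₀ hn0]
          have : (i:ℝ) ≤ n := by exact_mod_cast hi
          nlinarith
        linarith
    have tele : ∑ i ∈ Finset.range n, (u (i+1) - u i) = u n - u 0 :=
      Finset.sum_range_sub u n
    have hun : u n = g t := by
      simp only [hu]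
      rw [mul_div_assoc]
      congr 1
      field_simp
    have hu0 : u 0 = g 0 := by simp [hu]
    have step : ∀ i ∈ Finset.range n,
        |u (i+1) - u i| ≤ D1 * (t / n) ^ θ1 + D2 * (t / n) ^ θ2 := by
      intro i hi
      have hi' : i < n := Finset.mem_range.mp hi
      have hdiff : ((i:ℝ)+1) * t / n - (i:ℝ) * t / n = t / n := by ring
      have := h ((i:ℝ) * t / n) (hpt i hi'.le) (((i:ℕ)+1 : ℕ) * t / n)
        (by exact_mod_cast hpt (i+1) hi') ?_
      · have h2' := this
        push_cast at h2' ⊢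
        rw [hdiff] at h2'
        simpa [hu, mul_comm] using h2'
      · have : (0:ℝ) ≤ t / n := by positivity
        push_cast
        nlinarith
    calc |g t - g 0| = |∑ i ∈ Finset.range n, (u (i+1) - u i)| := by
          rw [tele, hun, hu0]
      _ ≤ ∑ i ∈ Finset.range n, |u (i+1) - u i| := Finset.abs_sum_le_sum_abs _ _
      _ ≤ ∑ _i ∈ Finset.range n, (D1 * (t / n) ^ θ1 + D2 * (t / n) ^ θ2) :=
          Finset.sum_le_sum step
      _ = n * (D1 * (t / n) ^ θ1 + D2 * (t / n) ^ θ2) := by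
          rw [Finset.sum_const, Finset.card_range, nsmul_eq_mul]
      _ = D1 * t ^ θ1 * (n:ℝ) ^ (1 - θ1) + D2 * t ^ θ2 * (n:ℝ) ^ (1 - θ2) := by
          rw [Real.div_rpow ht0 hn0.le, Real.div_rpow ht0 hn0.le,
            Real.rpow_sub hn0, Real.rpow_sub hn0, Real.rpow_one]
          field_simp
  have hlim : Tendsto (fun n : ℕ =>
      D1 * t ^ θ1 * (n:ℝ) ^ (1 - θ1) + D2 * t ^ θ2 * (n:ℝ) ^ (1 - θ2)) atTop (nhds 0) := by
    have l1 : Tendsto (fun x : ℝ => x ^ (1 - θ1)) atTop (nhds 0) := by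
      have := tendsto_rpow_neg_atTop (by linarith : (0:ℝ) < θ1 - 1)
      simpa [neg_sub] using this
    have l2 : Tendsto (fun x : ℝ => x ^ (1 - θ2)) atTop (nhds 0) := by
      have := tendsto_rpow_neg_atTop (by linarith : (0:ℝ) < θ2 - 1)
      simpa [neg_sub] using this
    have c := ((l1.const_mul (D1 * t ^ θ1)).add
      (l2.const_mul (D2 * t ^ θ2))).comp tendsto_natCast_atTop_atTop
    simp only [mul_zero, add_zero] at c
    exact c
  have : |g t - g 0| ≤ 0 := by
    refine ge_of_tendsto hlim ?_
    filter_upwards [eventually_ge_atTop 1] with n hn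
    exact key n hn
  have := abs_nonneg (g t - g 0)
  have : |g t - g 0| = 0 := le_antisymm ‹|g t - g 0| ≤ 0› this
  have := abs_eq_zero.mp this
  linarith

/-- conservation law for Young equations: if
`X ∈ C^γ Lip_M(V)` with `γ > 1/2`, the norm-conservation hypothesis
`|‖φ + X_{s,t}(φ)‖ - ‖φ‖| ≤ C_A |t-s|^ρ` holds for `‖φ‖ ≤ A` with `ρ > 1`,
and `ψ ∈ C^{1/2}` solves the Young equation (so that
`ψ_t = ψ_s + X_{s,t}(ψ_s) + R_{s,t}` with `‖R_{s,t}‖ ≤ C|t-s|^{γ+1/2}`),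
then `‖ψ_t‖ = ‖ψ_0‖` on `[0,T]`. -/
theorem stmt_8 (V : Type*) [NormedAddCommGroup V] [NormedSpace ℝ V]
    (T : ℝ) (hT : 0 < T) (M : ℝ) (hM : 0 ≤ M)
    (γ ρ : ℝ) (hγ : 1/2 < γ) (hγ1 : γ ≤ 1) (hρ : 1 < ρ)
    (X : ℝ → V → V) (K : ℝ) (hK : 0 ≤ K)
    (hX : ∀ s ∈ Icc (0:ℝ) T, ∀ t ∈ Icc (0:ℝ) T, ∀ φ φ' : V,
      ‖(X t φ - X s φ) - (X t φ' - X s φ')‖ ≤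
        K * |t - s| ^ γ * (1 + ‖φ‖ + ‖φ'‖) ^ M * ‖φ - φ'‖)
    (hcons : ∀ A : ℝ, 0 ≤ A → ∃ CA : ℝ, ∀ φ : V, ‖φ‖ ≤ A →
      ∀ s ∈ Icc (0:ℝ) T, ∀ t ∈ Icc (0:ℝ) T, s ≤ t →
        |‖φ + (X t φ - X s φ)‖ - ‖φ‖| ≤ CA * (t - s) ^ ρ)
    (ψ : ℝ → V)
    (hψHolder : ∃ C : ℝ, ∀ s ∈ Icc (0:ℝ) T, ∀ t ∈ Icc (0:ℝ) T,
      ‖ψ t - ψ s‖ ≤ C * |t - s| ^ ((1:ℝ)/2))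
    (hψeq : ∃ C : ℝ, ∀ s ∈ Icc (0:ℝ) T, ∀ t ∈ Icc (0:ℝ) T, s ≤ t →
      ‖ψ t - ψ s - (X t (ψ s) - X s (ψ s))‖ ≤ C * (t - s) ^ (γ + 1/2)) :
    ∀ t ∈ Icc (0:ℝ) T, ‖ψ t‖ = ‖ψ 0‖ := by
  obtain ⟨C1, hC1⟩ := hψHolder
  obtain ⟨C2, hC2⟩ := hψeq
  set A : ℝ := ‖ψ 0‖ + |C1| * T ^ ((1:ℝ)/2) with hA
  have hA0 : 0 ≤ A := by
    rw [hA]; positivity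
  have hbound : ∀ s ∈ Icc (0:ℝ) T, ‖ψ s‖ ≤ A := by
    intro s hs
    have h0 : (0:ℝ) ∈ Icc (0:ℝ) T := ⟨le_rfl, hT.le⟩
    have h1 := hC1 0 h0 s hs
    have habs : |s - 0| ≤ T := by
      rw [sub_zero, abs_of_nonneg hs.1]; exact hs.2
    have h2 : |s - 0| ^ ((1:ℝ)/2) ≤ T ^ ((1:ℝ)/2) :=
      Real.rpow_le_rpow (abs_nonneg _) habs (by norm_num)
    have h3 : C1 * |s - 0| ^ ((1:ℝ)/2) ≤ |C1| * T ^ ((1:ℝ)/2) := by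
      calc C1 * |s - 0| ^ ((1:ℝ)/2) ≤ |C1| * |s - 0| ^ ((1:ℝ)/2) := by
            apply mul_le_mul_of_nonneg_right (le_abs_self C1) (by positivity)
        _ ≤ |C1| * T ^ ((1:ℝ)/2) :=
            mul_le_mul_of_nonneg_left h2 (abs_nonneg _)
    have h4 : ‖ψ s‖ ≤ ‖ψ 0‖ + ‖ψ s - ψ 0‖ := by
      have := norm_sub_norm_le (ψ s) (ψ 0); linarith [abs_le.mp (le_refl |‖ψ s‖ - ‖ψ 0‖|)]
    have h5 : ‖ψ s‖ - ‖ψ 0‖ ≤ ‖ψ s - ψ 0‖ := norm_sub_norm_le (ψ s) (ψ 0)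
    rw [hA]; linarith
  obtain ⟨CA, hCA⟩ := hcons A hA0
  refine aux_const (fun t => ‖ψ t‖) T C2 CA (γ + 1/2) ρ (by linarith) hρ ?_
  intro s hs t ht hst
  have hEq := hC2 s hs t ht hst
  have hCons := hCA (ψ s) (hbound s hs) s hs t ht hst
  have key : |‖ψ t‖ - ‖ψ s‖| ≤
      ‖ψ t - (ψ s + (X t (ψ s) - X s (ψ s)))‖ + |‖ψ s + (X t (ψ s) - X s (ψ s))‖ - ‖ψ s‖| := by
    have h1 : |‖ψ t‖ - ‖ψ s + (X t (ψ s) - X s (ψ s))‖| ≤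
        ‖ψ t - (ψ s + (X t (ψ s) - X s (ψ s)))‖ := abs_norm_sub_norm_le _ _
    calc |‖ψ t‖ - ‖ψ s‖|
        ≤ |‖ψ t‖ - ‖ψ s + (X t (ψ s) - X s (ψ s))‖| +
          |‖ψ s + (X t (ψ s) - X s (ψ s))‖ - ‖ψ s‖| := by
          exact abs_sub_le _ _ _
      _ ≤ _ := by linarith
  have heq2 : ψ t - (ψ s + (X t (ψ s) - X s (ψ s))) =
      ψ t - ψ s - (X t (ψ s) - X s (ψ s)) := by abel
  rw [heq2] at key
  linarith
end

section
/- Trilinear estimate for the modulated derivative NLS operator: for θ>0, ρ > max(1/2, θ) and α ≥ θ/2, the quantity I = sup_{k∈ℤ\{0\}} |k|^{2α+2θ} Σ_{−k₁+k₂+k₃=k, k₂≠k, k₃≠k, k₁k₂k₃≠0} |k₁k₂k₃|^{−2α} |k−k₂|^{−2ρ} |k−k₃|^{−2ρ} is finite. -/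
open scoped ENNReal NNReal

noncomputable def Wt (s : ℝ) (n : ℤ) : ℝ≥0∞ :=
  if n = 0 then 0 else ENNReal.ofReal (|(n : ℝ)| ^ (-s))

lemma int_abs_one_le {n : ℤ} (hn : n ≠ 0) : (1 : ℝ) ≤ |(n : ℝ)| := by
  rw [← Int.cast_abs]
  exact_mod_cast Int.one_le_abs hn

lemma Wt_eq {s : ℝ} {n : ℤ} (hn : n ≠ 0) : Wt s n = ENNReal.ofReal (|(n : ℝ)| ^ (-s)) :=
  if_neg hn

lemma Wt_zero (s : ℝ) : Wt s 0 = 0 := if_pos rfl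

lemma Wt_merge (a b : ℝ) (n : ℤ) : Wt a n * Wt b n = Wt (a + b) n := by
  unfold Wt
  split
  · simp
  · rename_i hn
    have h1 := int_abs_one_le hn
    rw [← ENNReal.ofReal_mul (by positivity)]
    congr 1
    rw [← Real.rpow_add (by linarith), neg_add]

lemma Wt_pair {a b : ℝ} (ha : 0 ≤ a) (hb : 0 ≤ b) (n m : ℤ) :
    Wt a n * Wt b m ≤ Wt (a + b) n + Wt (a + b) m := by
  rcases eq_or_ne n 0 with rfl | hn
  · simp [Wt_zero]
  rcases eq_or_ne m 0 with rfl | hm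
  · simp [Wt_zero]
  have hn1 := int_abs_one_le hn
  have hm1 := int_abs_one_le hm
  rw [Wt_eq hn, Wt_eq hm, Wt_eq (s := a + b) hn, Wt_eq (s := a + b) hm,
    ← ENNReal.ofReal_mul (by positivity)]
  rcases le_total |(n : ℝ)| |(m : ℝ)| with h | h
  · refine le_trans ?_ (le_self_add (a := ENNReal.ofReal (|(n:ℝ)| ^ (-(a+b)))))
    apply ENNReal.ofReal_le_ofReal
    have h1 : |(m:ℝ)| ^ (-b) ≤ |(n:ℝ)| ^ (-b) :=
      Real.rpow_le_rpow_of_nonpos (by linarith) h (neg_nonpos.2 hb)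
    calc |(n:ℝ)| ^ (-a) * |(m:ℝ)| ^ (-b) ≤ |(n:ℝ)| ^ (-a) * |(n:ℝ)| ^ (-b) :=
          mul_le_mul_of_nonneg_left h1 (by positivity)
      _ = |(n:ℝ)| ^ (-(a + b)) := by rw [← Real.rpow_add (by linarith), neg_add]
  · refine le_trans ?_ (le_add_self (a := ENNReal.ofReal (|(m:ℝ)| ^ (-(a+b)))))
    apply ENNReal.ofReal_le_ofReal
    have h1 : |(n:ℝ)| ^ (-a) ≤ |(m:ℝ)| ^ (-a) :=
      Real.rpow_le_rpow_of_nonpos (by linarith) h (neg_nonpos.2 ha)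
    calc |(n:ℝ)| ^ (-a) * |(m:ℝ)| ^ (-b) ≤ |(m:ℝ)| ^ (-a) * |(m:ℝ)| ^ (-b) :=
          mul_le_mul_of_nonneg_right h1 (by positivity)
      _ = |(m:ℝ)| ^ (-(a + b)) := by rw [← Real.rpow_add (by linarith), neg_add]

lemma Wt_tsum_ne_top {s : ℝ} (hs : 1 < s) : (∑' n : ℤ, Wt s n) ≠ ⊤ := by
  have h1 : ∀ n : ℤ, Wt s n ≤ ENNReal.ofReal (|(n : ℝ)| ^ (-s)) := by
    intro n
    unfold Wt
    split
    · exact zero_le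
    · exact le_rfl
  have h2 : (∑' n : ℤ, ENNReal.ofReal (|(n : ℝ)| ^ (-s))) ≠ ⊤ := by
    rw [← ENNReal.ofReal_tsum_of_nonneg (fun n => by positivity)
      (Real.summable_abs_int_rpow hs)]
    exact ENNReal.ofReal_ne_top
  exact ((ENNReal.tsum_le_tsum h1).trans_lt h2.lt_top).ne

lemma Wt_tsum_sub (s : ℝ) (m : ℤ) : (∑' l : ℤ, Wt s (m - l)) = ∑' n : ℤ, Wt s n := by
  simpa using (Equiv.subLeft m).tsum_eq (Wt s)

lemma conv_le {a b s : ℝ} (ha : 0 ≤ a) (hb : 0 ≤ b) (hs : a + b = s) (m : ℤ) :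
    (∑' l : ℤ, Wt a l * Wt b (m - l)) ≤ 2 * ∑' n : ℤ, Wt s n := by
  subst hs
  calc (∑' l : ℤ, Wt a l * Wt b (m - l))
      ≤ ∑' l : ℤ, (Wt (a + b) l + Wt (a + b) (m - l)) :=
        ENNReal.tsum_le_tsum fun l => Wt_pair ha hb l (m - l)
    _ = (∑' l : ℤ, Wt (a + b) l) + ∑' l : ℤ, Wt (a + b) (m - l) := ENNReal.tsum_add
    _ = 2 * ∑' n : ℤ, Wt (a + b) n := by rw [Wt_tsum_sub, two_mul]

lemma conv_decay {a b c s : ℝ} (ha : 0 ≤ a) (hb : 0 ≤ b) (hc : 0 ≤ c)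
    (hca : c ≤ a) (hcb : c ≤ b) (h1 : c + 1 < a + b) (hs : a + b - c = s)
    {m : ℤ} (hm : m ≠ 0) :
    (∑' l : ℤ, Wt a l * Wt b (m - l)) ≤
      ENNReal.ofReal (2 ^ c * |(m : ℝ)| ^ (-c)) * (4 * ∑' n : ℤ, Wt s n) := by
  have hz : (0 : ℝ) < |(m : ℝ)| := lt_of_lt_of_le one_pos (int_abs_one_le hm)
  have key : ∀ l : ℤ, Wt a l * Wt b (m - l) ≤
      ENNReal.ofReal (2 ^ c * |(m : ℝ)| ^ (-c)) *
        (Wt (a - c) l * Wt b (m - l) + Wt a l * Wt (b - c) (m - l)) := by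
    intro l
    rcases eq_or_ne l 0 with rfl | hl
    · simp [Wt_zero]
    rcases eq_or_ne (m - l) 0 with hml | hml
    · rw [hml]; simp [Wt_zero]
    have hx := int_abs_one_le hl
    have hy := int_abs_one_le hml
    have htri : |(m : ℝ)| ≤ |(l : ℝ)| + |((m - l : ℤ) : ℝ)| := by
      push_cast
      calc |(m : ℝ)| = |(l : ℝ) + ((m : ℝ) - l)| := by norm_num
        _ ≤ |(l : ℝ)| + |(m : ℝ) - (l : ℝ)| := abs_add_le _ _
    have half : ∀ u : ℝ, |(m:ℝ)| / 2 ≤ u → (0:ℝ) < u → ∀ e : ℝ, 0 ≤ e →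
        u ^ (-e) ≤ 2 ^ e * |(m:ℝ)| ^ (-e) := by
      intro u hu hu0 e he
      have e2 : u ^ (-e) ≤ (|(m:ℝ)| / 2) ^ (-e) :=
        Real.rpow_le_rpow_of_nonpos (by linarith) hu (neg_nonpos.2 he)
      have e3 : (|(m:ℝ)| / 2) ^ (-e) = 2 ^ e * |(m:ℝ)| ^ (-e) := by
        rw [div_eq_mul_inv, Real.mul_rpow hz.le (by norm_num),
          Real.inv_rpow (by norm_num : (0:ℝ) ≤ 2), Real.rpow_neg (by norm_num : (0:ℝ) ≤ 2),
          inv_inv, mul_comm]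
      linarith [e2, e3.le, e3.ge]
    rcases le_total |(l : ℝ)| |((m - l : ℤ) : ℝ)| with hxy | hxy
    · have hy2 : |(m:ℝ)| / 2 ≤ |((m - l : ℤ) : ℝ)| := by linarith
      have hineq : |(l:ℝ)| ^ (-a) * |((m-l:ℤ):ℝ)| ^ (-b) ≤
          (2 ^ c * |(m:ℝ)| ^ (-c)) * (|(l:ℝ)| ^ (-a) * |((m-l:ℤ):ℝ)| ^ (-(b - c))) := by
        have e1 : |((m-l:ℤ):ℝ)| ^ (-b) = |((m-l:ℤ):ℝ)| ^ (-c) * |((m-l:ℤ):ℝ)| ^ (-(b-c)) := by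
          rw [← Real.rpow_add (by linarith)]
          ring_nf
        have e2 := half _ hy2 (by linarith) c hc
        calc |(l:ℝ)| ^ (-a) * |((m-l:ℤ):ℝ)| ^ (-b)
            = |((m-l:ℤ):ℝ)| ^ (-c) * (|(l:ℝ)| ^ (-a) * |((m-l:ℤ):ℝ)| ^ (-(b-c))) := by
              rw [e1]; ring
          _ ≤ _ := mul_le_mul_of_nonneg_right e2 (by positivity)
      calc Wt a l * Wt b (m - l)
          = ENNReal.ofReal (|(l:ℝ)| ^ (-a) * |((m-l:ℤ):ℝ)| ^ (-b)) := by
            rw [Wt_eq hl, Wt_eq hml, ← ENNReal.ofReal_mul (by positivity)]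
        _ ≤ ENNReal.ofReal ((2 ^ c * |(m:ℝ)| ^ (-c)) *
              (|(l:ℝ)| ^ (-a) * |((m-l:ℤ):ℝ)| ^ (-(b - c)))) :=
            ENNReal.ofReal_le_ofReal hineq
        _ = ENNReal.ofReal (2 ^ c * |(m:ℝ)| ^ (-c)) * (Wt a l * Wt (b - c) (m - l)) := by
            rw [Wt_eq hl, Wt_eq hml, ← ENNReal.ofReal_mul (by positivity),
              ← ENNReal.ofReal_mul (by positivity)]
        _ ≤ _ := mul_le_mul_right le_add_self _
    · have hx2 : |(m:ℝ)| / 2 ≤ |(l : ℝ)| := by linarith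
      have hineq : |(l:ℝ)| ^ (-a) * |((m-l:ℤ):ℝ)| ^ (-b) ≤
          (2 ^ c * |(m:ℝ)| ^ (-c)) * (|(l:ℝ)| ^ (-(a - c)) * |((m-l:ℤ):ℝ)| ^ (-b)) := by
        have e1 : |(l:ℝ)| ^ (-a) = |(l:ℝ)| ^ (-c) * |(l:ℝ)| ^ (-(a-c)) := by
          rw [← Real.rpow_add (by linarith)]
          ring_nf
        have e2 := half _ hx2 (by linarith) c hc
        calc |(l:ℝ)| ^ (-a) * |((m-l:ℤ):ℝ)| ^ (-b)
            = |(l:ℝ)| ^ (-c) * (|(l:ℝ)| ^ (-(a-c)) * |((m-l:ℤ):ℝ)| ^ (-b)) := by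
              rw [e1]; ring
          _ ≤ _ := mul_le_mul_of_nonneg_right e2 (by positivity)
      calc Wt a l * Wt b (m - l)
          = ENNReal.ofReal (|(l:ℝ)| ^ (-a) * |((m-l:ℤ):ℝ)| ^ (-b)) := by
            rw [Wt_eq hl, Wt_eq hml, ← ENNReal.ofReal_mul (by positivity)]
        _ ≤ ENNReal.ofReal ((2 ^ c * |(m:ℝ)| ^ (-c)) *
              (|(l:ℝ)| ^ (-(a - c)) * |((m-l:ℤ):ℝ)| ^ (-b))) :=
            ENNReal.ofReal_le_ofReal hineq
        _ = ENNReal.ofReal (2 ^ c * |(m:ℝ)| ^ (-c)) * (Wt (a - c) l * Wt b (m - l)) := by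
            rw [Wt_eq hl, Wt_eq hml, ← ENNReal.ofReal_mul (by positivity),
              ← ENNReal.ofReal_mul (by positivity)]
        _ ≤ _ := mul_le_mul_right le_self_add _
  calc (∑' l : ℤ, Wt a l * Wt b (m - l))
      ≤ ∑' l : ℤ, ENNReal.ofReal (2 ^ c * |(m : ℝ)| ^ (-c)) *
          (Wt (a - c) l * Wt b (m - l) + Wt a l * Wt (b - c) (m - l)) :=
        ENNReal.tsum_le_tsum key
    _ = ENNReal.ofReal (2 ^ c * |(m : ℝ)| ^ (-c)) *
          ((∑' l : ℤ, Wt (a - c) l * Wt b (m - l)) +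
            ∑' l : ℤ, Wt a l * Wt (b - c) (m - l)) := by
        rw [ENNReal.tsum_mul_left, ENNReal.tsum_add]
    _ ≤ ENNReal.ofReal (2 ^ c * |(m : ℝ)| ^ (-c)) *
          ((2 * ∑' n : ℤ, Wt s n) + 2 * ∑' n : ℤ, Wt s n) := by
        gcongr
        · exact conv_le (by linarith) hb (by linarith) m
        · exact conv_le ha (by linarith) (by linarith) m
    _ = ENNReal.ofReal (2 ^ c * |(m : ℝ)| ^ (-c)) * (4 * ∑' n : ℤ, Wt s n) := by
        ring

lemma rpow_sum3 {a x y z w : ℝ} (ha : 0 ≤ a) (hx : 0 ≤ x) (hy : 0 ≤ y) (hz : 0 ≤ z)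
    (hw : 0 ≤ w) (h : w ≤ x + y + z) :
    w ^ a ≤ 3 ^ a * (x ^ a + y ^ a + z ^ a) := by
  have hxm : x ≤ max x (max y z) := le_max_left _ _
  have hym : y ≤ max x (max y z) := le_trans (le_max_left _ _) (le_max_right _ _)
  have hzm : z ≤ max x (max y z) := le_trans (le_max_right _ _) (le_max_right _ _)
  have hm0 : 0 ≤ max x (max y z) := hx.trans hxm
  have h4 : w ^ a ≤ (3 * max x (max y z)) ^ a :=
    Real.rpow_le_rpow hw (by linarith) ha
  rw [Real.mul_rpow (by norm_num) hm0] at h4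
  refine h4.trans (mul_le_mul_of_nonneg_left ?_ (by positivity))
  have px := Real.rpow_nonneg hx a
  have py := Real.rpow_nonneg hy a
  have pz := Real.rpow_nonneg hz a
  rcases max_choice x (max y z) with h1 | h1
  · rw [h1]; linarith
  · rw [h1]
    rcases max_choice y z with h2 | h2 <;> rw [h2] <;> linarith
/-- trilinear estimate for the modulated derivative NLS: for
`θ > 0`, `ρ > max(1/2, θ)` and `α ≥ θ/2`, the quantity
`I = sup_{k ≠ 0} |k|^{2α+2θ} Σ_{-k₁+k₂+k₃=k, k₂≠k, k₃≠k, k₁k₂k₃≠0}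
|k₁k₂k₃|^{-2α} |k-k₂|^{-2ρ} |k-k₃|^{-2ρ}` is finite (the sums converge and
are uniformly bounded). -/
theorem stmt_12 (θ α ρ : ℝ) (hθ : 0 < θ) (hρ : max (1/2) θ < ρ)
    (hα : θ/2 ≤ α) :
    ∃ C : ℝ, ∀ k : ℤ, k ≠ 0 →
      Summable (fun p : ℤ × ℤ =>
        if (p.1 + p.2 - k) * p.1 * p.2 ≠ 0 ∧ p.1 ≠ k ∧ p.2 ≠ k then
          ((|(p.1 + p.2 - k) * p.1 * p.2| : ℤ) : ℝ) ^ (-(2 * α)) *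
            ((|k - p.1| : ℤ) : ℝ) ^ (-(2 * ρ)) *
            ((|k - p.2| : ℤ) : ℝ) ^ (-(2 * ρ))
        else 0) ∧
      ((|k| : ℤ) : ℝ) ^ (2 * α + 2 * θ) *
        (∑' p : ℤ × ℤ,
          if (p.1 + p.2 - k) * p.1 * p.2 ≠ 0 ∧ p.1 ≠ k ∧ p.2 ≠ k then
            ((|(p.1 + p.2 - k) * p.1 * p.2| : ℤ) : ℝ) ^ (-(2 * α)) *
              ((|k - p.1| : ℤ) : ℝ) ^ (-(2 * ρ)) *
              ((|k - p.2| : ℤ) : ℝ) ^ (-(2 * ρ))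
          else 0) ≤ C := by
  have hρ2 : (1:ℝ)/2 < ρ := lt_of_le_of_lt (le_max_left _ _) hρ
  have hθρ : θ < ρ := lt_of_le_of_lt (le_max_right _ _) hρ
  have hα0 : 0 < α := lt_of_lt_of_le (by linarith) hα
  have hθ2α : θ ≤ 2 * α := by linarith
  set s0 : ℝ := 2*α + 2*ρ - θ with hs0
  have hs01 : 1 < s0 := by rw [hs0]; linarith
  set K : ℝ≥0∞ := 4 * ∑' n : ℤ, Wt s0 n with hK
  have hKtop : K ≠ ⊤ := ENNReal.mul_ne_top (by norm_num) (Wt_tsum_ne_top hs01)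
  set C' : ℝ≥0∞ := ENNReal.ofReal (3 ^ (2*α)) *
      ((ENNReal.ofReal (2 ^ (2*θ)) + 2 * ENNReal.ofReal (2 ^ (3*θ))) * (K * K)) with hC
  have hCtop : C' ≠ ⊤ := by
    refine ENNReal.mul_ne_top ENNReal.ofReal_ne_top (ENNReal.mul_ne_top ?_ ?_)
    · exact ENNReal.add_ne_top.2 ⟨ENNReal.ofReal_ne_top,
        ENNReal.mul_ne_top (by norm_num) ENNReal.ofReal_ne_top⟩
    · exact ENNReal.mul_ne_top hKtop hKtop
  refine ⟨C'.toReal, fun k hk => ?_⟩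
  set F : ℤ × ℤ → ℝ := fun p =>
    if (p.1 + p.2 - k) * p.1 * p.2 ≠ 0 ∧ p.1 ≠ k ∧ p.2 ≠ k then
      ((|(p.1 + p.2 - k) * p.1 * p.2| : ℤ) : ℝ) ^ (-(2 * α)) *
        ((|k - p.1| : ℤ) : ℝ) ^ (-(2 * ρ)) *
        ((|k - p.2| : ℤ) : ℝ) ^ (-(2 * ρ))
    else 0 with hFdef
  have hk1 : (1:ℝ) ≤ |(k:ℝ)| := int_abs_one_le hk
  have hk0 : (0:ℝ) < |(k:ℝ)| := by linarith
  have hFnn : ∀ p, 0 ≤ F p := by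
    intro p
    rw [hFdef]
    dsimp only
    split
    · have h1 : (0:ℝ) ≤ ((|(p.1 + p.2 - k) * p.1 * p.2| : ℤ) : ℝ) := by positivity
      have h2 : (0:ℝ) ≤ ((|k - p.1| : ℤ) : ℝ) := by positivity
      have h3 : (0:ℝ) ≤ ((|k - p.2| : ℤ) : ℝ) := by positivity
      positivity
    · exact le_refl 0
  set T1 : ℤ × ℤ → ℝ≥0∞ := fun p =>
    (Wt (2*α) p.1 * Wt (2*ρ) (k - p.1)) * (Wt (2*α) p.2 * Wt (2*ρ) (k - p.2)) with hT1def
  set T2 : ℤ × ℤ → ℝ≥0∞ := fun p =>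
    (Wt (2*α) p.2 * Wt (2*ρ) (k - p.2)) * (Wt (2*α) (p.1 + p.2 - k) * Wt (2*ρ) (k - p.1)) with hT2def
  set T3 : ℤ × ℤ → ℝ≥0∞ := fun p =>
    (Wt (2*α) p.1 * Wt (2*ρ) (k - p.1)) * (Wt (2*α) (p.1 + p.2 - k) * Wt (2*ρ) (k - p.2)) with hT3def
  have E1 : ∀ p : ℤ × ℤ, ENNReal.ofReal (|(k:ℝ)| ^ (2*α+2*θ) * F p) ≤
      ENNReal.ofReal (3 ^ (2*α)) *
        (ENNReal.ofReal (|(k:ℝ)| ^ (2*θ)) * (T1 p + T2 p + T3 p)) := by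
    intro p
    by_cases hp : (p.1 + p.2 - k) * p.1 * p.2 ≠ 0 ∧ p.1 ≠ k ∧ p.2 ≠ k
    · obtain ⟨hprod, hp1k, hp2k⟩ := hp
      have h1 : p.1 + p.2 - k ≠ 0 := fun h => hprod (by rw [h, zero_mul, zero_mul])
      have h2 : p.1 ≠ 0 := fun h => hprod (by rw [h, mul_zero, zero_mul])
      have h3 : p.2 ≠ 0 := fun h => hprod (by rw [h, mul_zero])
      have h4 : k - p.1 ≠ 0 := sub_ne_zero.2 (Ne.symm hp1k)
      have h5 : k - p.2 ≠ 0 := sub_ne_zero.2 (Ne.symm hp2k)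
      have hx1 : (1:ℝ) ≤ |((p.1 + p.2 - k : ℤ) : ℝ)| := int_abs_one_le h1
      have hx2 : (1:ℝ) ≤ |((p.1 : ℤ) : ℝ)| := int_abs_one_le h2
      have hx3 : (1:ℝ) ≤ |((p.2 : ℤ) : ℝ)| := int_abs_one_le h3
      have hy2 : (1:ℝ) ≤ |((k - p.1 : ℤ) : ℝ)| := int_abs_one_le h4
      have hy3 : (1:ℝ) ≤ |((k - p.2 : ℤ) : ℝ)| := int_abs_one_le h5
      have hFp : F p = |((p.1 + p.2 - k : ℤ) : ℝ)| ^ (-(2*α)) * |((p.1 : ℤ) : ℝ)| ^ (-(2*α)) *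
          |((p.2 : ℤ) : ℝ)| ^ (-(2*α)) *
          (|((k - p.1 : ℤ) : ℝ)| ^ (-(2*ρ)) * |((k - p.2 : ℤ) : ℝ)| ^ (-(2*ρ))) := by
        rw [hFdef]
        dsimp only
        rw [if_pos ⟨hprod, hp1k, hp2k⟩]
        have hc1 : ((|(p.1 + p.2 - k) * p.1 * p.2| : ℤ) : ℝ) =
            |((p.1 + p.2 - k : ℤ) : ℝ)| * |((p.1 : ℤ) : ℝ)| * |((p.2 : ℤ) : ℝ)| := by
          rw [abs_mul, abs_mul]
          push_cast
          ring
        rw [hc1, Real.mul_rpow (by positivity) (abs_nonneg _),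
          Real.mul_rpow (by positivity) (abs_nonneg _), Int.cast_abs, Int.cast_abs]
        push_cast
        ring
      -- real-side key inequality
      have hsplit : |(k:ℝ)| ^ (2*α+2*θ) = |(k:ℝ)| ^ (2*α) * |(k:ℝ)| ^ (2*θ) :=
        Real.rpow_add hk0 _ _
      have htri : |(k:ℝ)| ≤ |((p.1 + p.2 - k : ℤ) : ℝ)| + |((p.1 : ℤ) : ℝ)| + |((p.2 : ℤ) : ℝ)| := by
        have heq : (k:ℝ) = ((p.1:ℝ) + (p.2:ℝ)) - ((p.1 + p.2 - k : ℤ) : ℝ) := by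
          push_cast
          ring
        have t1 : |(p.1:ℝ) + (p.2:ℝ) - ((p.1 + p.2 - k : ℤ) : ℝ)| ≤
            |(p.1:ℝ) + (p.2:ℝ)| + |((p.1 + p.2 - k : ℤ) : ℝ)| := abs_sub _ _
        have t2 : |(p.1:ℝ) + (p.2:ℝ)| ≤ |(p.1:ℝ)| + |(p.2:ℝ)| := abs_add_le _ _
        calc |(k:ℝ)| = |(p.1:ℝ) + (p.2:ℝ) - ((p.1 + p.2 - k : ℤ) : ℝ)| := by rw [← heq]
          _ ≤ _ := by push_cast at t1 t2 ⊢; linarith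
      have h2a : |(k:ℝ)| ^ (2*α) ≤ 3 ^ (2*α) * (|((p.1 + p.2 - k : ℤ) : ℝ)| ^ (2*α) +
          |((p.1 : ℤ) : ℝ)| ^ (2*α) + |((p.2 : ℤ) : ℝ)| ^ (2*α)) :=
        rpow_sum3 (by linarith) (abs_nonneg _) (abs_nonneg _) (abs_nonneg _) (abs_nonneg _) htri
      have c1 : |((p.1 + p.2 - k : ℤ) : ℝ)| ^ (2*α) * |((p.1 + p.2 - k : ℤ) : ℝ)| ^ (-(2*α)) = 1 := by
        rw [← Real.rpow_add (by linarith)]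
        simp
      have c2 : |((p.1 : ℤ) : ℝ)| ^ (2*α) * |((p.1 : ℤ) : ℝ)| ^ (-(2*α)) = 1 := by
        rw [← Real.rpow_add (by linarith)]
        simp
      have c3 : |((p.2 : ℤ) : ℝ)| ^ (2*α) * |((p.2 : ℤ) : ℝ)| ^ (-(2*α)) = 1 := by
        rw [← Real.rpow_add (by linarith)]
        simp
      have key : |(k:ℝ)| ^ (2*α+2*θ) * F p ≤ 3 ^ (2*α) * (|(k:ℝ)| ^ (2*θ) *
          ((|((p.1:ℤ):ℝ)| ^ (-(2*α)) * |((k - p.1 : ℤ):ℝ)| ^ (-(2*ρ))) *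
            (|((p.2:ℤ):ℝ)| ^ (-(2*α)) * |((k - p.2 : ℤ):ℝ)| ^ (-(2*ρ))) +
          (|((p.2:ℤ):ℝ)| ^ (-(2*α)) * |((k - p.2 : ℤ):ℝ)| ^ (-(2*ρ))) *
            (|((p.1 + p.2 - k : ℤ):ℝ)| ^ (-(2*α)) * |((k - p.1 : ℤ):ℝ)| ^ (-(2*ρ))) +
          (|((p.1:ℤ):ℝ)| ^ (-(2*α)) * |((k - p.1 : ℤ):ℝ)| ^ (-(2*ρ))) *
            (|((p.1 + p.2 - k : ℤ):ℝ)| ^ (-(2*α)) * |((k - p.2 : ℤ):ℝ)| ^ (-(2*ρ))))) := by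
        rw [hFp, hsplit]
        have hA : (0:ℝ) ≤ |((p.1 + p.2 - k : ℤ) : ℝ)| ^ (-(2*α)) * |((p.1 : ℤ) : ℝ)| ^ (-(2*α)) *
            |((p.2 : ℤ) : ℝ)| ^ (-(2*α)) *
            (|((k - p.1 : ℤ) : ℝ)| ^ (-(2*ρ)) * |((k - p.2 : ℤ) : ℝ)| ^ (-(2*ρ))) := by positivity
        have step : |(k:ℝ)| ^ (2*α) * |(k:ℝ)| ^ (2*θ) *
            (|((p.1 + p.2 - k : ℤ) : ℝ)| ^ (-(2*α)) * |((p.1 : ℤ) : ℝ)| ^ (-(2*α)) *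
              |((p.2 : ℤ) : ℝ)| ^ (-(2*α)) *
              (|((k - p.1 : ℤ) : ℝ)| ^ (-(2*ρ)) * |((k - p.2 : ℤ) : ℝ)| ^ (-(2*ρ)))) ≤
            (3 ^ (2*α) * (|((p.1 + p.2 - k : ℤ) : ℝ)| ^ (2*α) +
              |((p.1 : ℤ) : ℝ)| ^ (2*α) + |((p.2 : ℤ) : ℝ)| ^ (2*α))) * |(k:ℝ)| ^ (2*θ) *
            (|((p.1 + p.2 - k : ℤ) : ℝ)| ^ (-(2*α)) * |((p.1 : ℤ) : ℝ)| ^ (-(2*α)) *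
              |((p.2 : ℤ) : ℝ)| ^ (-(2*α)) *
              (|((k - p.1 : ℤ) : ℝ)| ^ (-(2*ρ)) * |((k - p.2 : ℤ) : ℝ)| ^ (-(2*ρ)))) := by
          apply mul_le_mul_of_nonneg_right (mul_le_mul_of_nonneg_right h2a (by positivity)) hA
        refine le_trans (le_of_eq (by ring)) (step.trans (le_of_eq ?_))
        linear_combination (3 ^ (2*α) * |(k:ℝ)| ^ (2*θ) * |((p.1:ℤ):ℝ)| ^ (-(2*α)) *
            |((p.2:ℤ):ℝ)| ^ (-(2*α)) * |((k - p.1 : ℤ):ℝ)| ^ (-(2*ρ)) *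
            |((k - p.2 : ℤ):ℝ)| ^ (-(2*ρ))) * c1 +
          (3 ^ (2*α) * |(k:ℝ)| ^ (2*θ) * |((p.1 + p.2 - k : ℤ):ℝ)| ^ (-(2*α)) *
            |((p.2:ℤ):ℝ)| ^ (-(2*α)) * |((k - p.1 : ℤ):ℝ)| ^ (-(2*ρ)) *
            |((k - p.2 : ℤ):ℝ)| ^ (-(2*ρ))) * c2 +
          (3 ^ (2*α) * |(k:ℝ)| ^ (2*θ) * |((p.1 + p.2 - k : ℤ):ℝ)| ^ (-(2*α)) *
            |((p.1:ℤ):ℝ)| ^ (-(2*α)) * |((k - p.1 : ℤ):ℝ)| ^ (-(2*ρ)) *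
            |((k - p.2 : ℤ):ℝ)| ^ (-(2*ρ))) * c3
      -- lift to ENNReal
      have t1e : T1 p = ENNReal.ofReal ((|((p.1:ℤ):ℝ)| ^ (-(2*α)) * |((k - p.1 : ℤ):ℝ)| ^ (-(2*ρ))) *
          (|((p.2:ℤ):ℝ)| ^ (-(2*α)) * |((k - p.2 : ℤ):ℝ)| ^ (-(2*ρ)))) := by
        rw [hT1def]
        dsimp only
        rw [Wt_eq h2, Wt_eq h4, Wt_eq h3, Wt_eq h5, ← ENNReal.ofReal_mul (by positivity),
          ← ENNReal.ofReal_mul (by positivity), ← ENNReal.ofReal_mul (by positivity)]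
      have t2e : T2 p = ENNReal.ofReal ((|((p.2:ℤ):ℝ)| ^ (-(2*α)) * |((k - p.2 : ℤ):ℝ)| ^ (-(2*ρ))) *
          (|((p.1 + p.2 - k : ℤ):ℝ)| ^ (-(2*α)) * |((k - p.1 : ℤ):ℝ)| ^ (-(2*ρ)))) := by
        rw [hT2def]
        dsimp only
        rw [Wt_eq h3, Wt_eq h5, Wt_eq h1, Wt_eq h4, ← ENNReal.ofReal_mul (by positivity),
          ← ENNReal.ofReal_mul (by positivity), ← ENNReal.ofReal_mul (by positivity)]
      have t3e : T3 p = ENNReal.ofReal ((|((p.1:ℤ):ℝ)| ^ (-(2*α)) * |((k - p.1 : ℤ):ℝ)| ^ (-(2*ρ))) *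
          (|((p.1 + p.2 - k : ℤ):ℝ)| ^ (-(2*α)) * |((k - p.2 : ℤ):ℝ)| ^ (-(2*ρ)))) := by
        rw [hT3def]
        dsimp only
        rw [Wt_eq h2, Wt_eq h4, Wt_eq h1, Wt_eq h5, ← ENNReal.ofReal_mul (by positivity),
          ← ENNReal.ofReal_mul (by positivity), ← ENNReal.ofReal_mul (by positivity)]
      calc ENNReal.ofReal (|(k:ℝ)| ^ (2*α+2*θ) * F p)
          ≤ ENNReal.ofReal (3 ^ (2*α) * (|(k:ℝ)| ^ (2*θ) *
              ((|((p.1:ℤ):ℝ)| ^ (-(2*α)) * |((k - p.1 : ℤ):ℝ)| ^ (-(2*ρ))) *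
                (|((p.2:ℤ):ℝ)| ^ (-(2*α)) * |((k - p.2 : ℤ):ℝ)| ^ (-(2*ρ))) +
              (|((p.2:ℤ):ℝ)| ^ (-(2*α)) * |((k - p.2 : ℤ):ℝ)| ^ (-(2*ρ))) *
                (|((p.1 + p.2 - k : ℤ):ℝ)| ^ (-(2*α)) * |((k - p.1 : ℤ):ℝ)| ^ (-(2*ρ))) +
              (|((p.1:ℤ):ℝ)| ^ (-(2*α)) * |((k - p.1 : ℤ):ℝ)| ^ (-(2*ρ))) *
                (|((p.1 + p.2 - k : ℤ):ℝ)| ^ (-(2*α)) * |((k - p.2 : ℤ):ℝ)| ^ (-(2*ρ)))))) :=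
            ENNReal.ofReal_le_ofReal key
        _ = ENNReal.ofReal (3 ^ (2*α)) *
              (ENNReal.ofReal (|(k:ℝ)| ^ (2*θ)) * (T1 p + T2 p + T3 p)) := by
            rw [t1e, t2e, t3e, ← ENNReal.ofReal_add (by positivity) (by positivity),
              ← ENNReal.ofReal_add (by positivity) (by positivity),
              ← ENNReal.ofReal_mul (by positivity), ← ENNReal.ofReal_mul (by positivity)]
    · have hF0 : F p = 0 := by rw [hFdef]; dsimp only; rw [if_neg hp]
      rw [hF0, mul_zero, ENNReal.ofReal_zero]
      exact zero_le
  -- bound for the basic convolution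
  have hconv1 : (∑' a : ℤ, Wt (2*α) a * Wt (2*ρ) (k - a)) ≤
      ENNReal.ofReal (2 ^ θ * |(k:ℝ)| ^ (-θ)) * K := by
    rw [hK]
    exact conv_decay (by linarith) (by linarith) hθ.le hθ2α (by linarith) (by linarith)
      (by rw [hs0]) hk
  -- sum of T1
  have hsT1 : (∑' p : ℤ × ℤ, T1 p) ≤
      (ENNReal.ofReal (2 ^ θ * |(k:ℝ)| ^ (-θ)) * K) * (ENNReal.ofReal (2 ^ θ * |(k:ℝ)| ^ (-θ)) * K) := by
    have heq : (∑' p : ℤ × ℤ, T1 p) =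
        (∑' a : ℤ, Wt (2*α) a * Wt (2*ρ) (k - a)) * (∑' a : ℤ, Wt (2*α) a * Wt (2*ρ) (k - a)) := by
      rw [ENNReal.tsum_prod']
      calc (∑' (a : ℤ) (b : ℤ), T1 (a, b))
          = ∑' a : ℤ, (Wt (2*α) a * Wt (2*ρ) (k - a)) * ∑' b : ℤ, (Wt (2*α) b * Wt (2*ρ) (k - b)) := by
            congr 1
            funext a
            rw [hT1def]
            dsimp only
            exact ENNReal.tsum_mul_left
        _ = _ := ENNReal.tsum_mul_right
    rw [heq]
    exact mul_le_mul' hconv1 hconv1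
  -- inner convolution for T3
  have hinner : ∀ a : ℤ, (∑' b : ℤ, Wt (2*α) (a + b - k) * Wt (2*ρ) (k - b)) =
      ∑' l : ℤ, Wt (2*ρ) l * Wt (2*α) (a - l) := by
    intro a
    rw [← (Equiv.subLeft k).tsum_eq (fun b => Wt (2*α) (a + b - k) * Wt (2*ρ) (k - b))]
    congr 1
    funext l
    simp only [Equiv.subLeft_apply]
    rw [show a + (k - l) - k = a - l by ring, show k - (k - l) = l by ring, mul_comm]
  have hinner_le : ∀ a : ℤ, a ≠ 0 →
      (∑' l : ℤ, Wt (2*ρ) l * Wt (2*α) (a - l)) ≤ ENNReal.ofReal (2 ^ θ * |(a:ℝ)| ^ (-θ)) * K := by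
    intro a ha
    rw [hK]
    exact conv_decay (by linarith) (by linarith) hθ.le (by linarith) hθ2α (by linarith)
      (by rw [hs0]; ring) ha
  have hTerm : ∀ a : ℤ, (Wt (2*α) a * Wt (2*ρ) (k - a)) *
        (∑' b : ℤ, Wt (2*α) (a + b - k) * Wt (2*ρ) (k - b))
      ≤ ENNReal.ofReal (2 ^ θ) * (Wt (2*α + θ) a * Wt (2*ρ) (k - a) * K) := by
    intro a
    rcases eq_or_ne a 0 with rfl | ha
    · simp [Wt_zero]
    · rw [hinner a]
      calc (Wt (2*α) a * Wt (2*ρ) (k - a)) * ∑' l : ℤ, Wt (2*ρ) l * Wt (2*α) (a - l)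
          ≤ (Wt (2*α) a * Wt (2*ρ) (k - a)) * (ENNReal.ofReal (2 ^ θ * |(a:ℝ)| ^ (-θ)) * K) :=
            mul_le_mul_right (hinner_le a ha) _
        _ = ENNReal.ofReal (2 ^ θ) * (Wt (2*α + θ) a * Wt (2*ρ) (k - a) * K) := by
            rw [ENNReal.ofReal_mul (by positivity), ← Wt_merge (2*α) θ a, ← Wt_eq (s := θ) ha]
            ring
  have hsT3 : (∑' p : ℤ × ℤ, T3 p) ≤ ENNReal.ofReal (2 ^ θ) *
      (ENNReal.ofReal (2 ^ (2*θ) * |(k:ℝ)| ^ (-(2*θ))) * K * K) := by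
    rw [ENNReal.tsum_prod']
    have hstep1 : (∑' (a : ℤ) (b : ℤ), T3 (a, b)) =
        ∑' a : ℤ, (Wt (2*α) a * Wt (2*ρ) (k - a)) *
          ∑' b : ℤ, Wt (2*α) (a + b - k) * Wt (2*ρ) (k - b) := by
      congr 1
      funext a
      rw [hT3def]
      dsimp only
      exact ENNReal.tsum_mul_left
    rw [hstep1]
    calc (∑' a : ℤ, (Wt (2*α) a * Wt (2*ρ) (k - a)) *
            ∑' b : ℤ, Wt (2*α) (a + b - k) * Wt (2*ρ) (k - b))
        ≤ ∑' a : ℤ, ENNReal.ofReal (2 ^ θ) * (Wt (2*α + θ) a * Wt (2*ρ) (k - a) * K) :=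
          ENNReal.tsum_le_tsum hTerm
      _ = ENNReal.ofReal (2 ^ θ) * ((∑' a : ℤ, Wt (2*α + θ) a * Wt (2*ρ) (k - a)) * K) := by
          rw [ENNReal.tsum_mul_left, ENNReal.tsum_mul_right]
      _ ≤ ENNReal.ofReal (2 ^ θ) * ((ENNReal.ofReal (2 ^ (2*θ) * |(k:ℝ)| ^ (-(2*θ))) * K) * K) := by
          gcongr
          rw [hK]
          exact conv_decay (by linarith) (by linarith) (by linarith) (by linarith) (by linarith)
            (by linarith) (by rw [hs0]; ring) hk
      _ = _ := by ring
  have hsT2 : (∑' p : ℤ × ℤ, T2 p) = ∑' p : ℤ × ℤ, T3 p := by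
    rw [← (Equiv.prodComm ℤ ℤ).tsum_eq T3]
    congr 1
    funext p
    rw [hT2def, hT3def]
    simp only [Equiv.prodComm_apply, Prod.fst_swap, Prod.snd_swap]
    rw [show p.2 + p.1 - k = p.1 + p.2 - k by ring]
  -- numerical identities
  have hkk : |(k:ℝ)| ^ (2*θ) * (|(k:ℝ)| ^ (-θ) * |(k:ℝ)| ^ (-θ)) = 1 := by
    rw [← Real.rpow_add hk0, ← Real.rpow_add hk0, show 2*θ + (-θ + -θ) = 0 by ring,
      Real.rpow_zero]
  have hb1 : (2:ℝ) ^ θ * 2 ^ θ = 2 ^ (2*θ) := by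
    rw [← Real.rpow_add (by norm_num : (0:ℝ) < 2), show θ + θ = 2*θ by ring]
  have habs1 : |(k:ℝ)| ^ (2*θ) * ((2 ^ θ * |(k:ℝ)| ^ (-θ)) * (2 ^ θ * |(k:ℝ)| ^ (-θ))) =
      (2:ℝ) ^ (2*θ) := by
    linear_combination ((2:ℝ) ^ θ * 2 ^ θ) * hkk + hb1
  have hkk2 : |(k:ℝ)| ^ (2*θ) * |(k:ℝ)| ^ (-(2*θ)) = 1 := by
    rw [← Real.rpow_add hk0, show 2*θ + -(2*θ) = 0 by ring, Real.rpow_zero]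
  have hb2 : (2:ℝ) ^ θ * 2 ^ (2*θ) = 2 ^ (3*θ) := by
    rw [← Real.rpow_add (by norm_num : (0:ℝ) < 2), show θ + 2*θ = 3*θ by ring]
  have habs2 : |(k:ℝ)| ^ (2*θ) * (2 ^ θ * (2 ^ (2*θ) * |(k:ℝ)| ^ (-(2*θ)))) =
      (2:ℝ) ^ (3*θ) := by
    linear_combination ((2:ℝ) ^ θ * 2 ^ (2*θ)) * hkk2 + hb2
  have eqA : ENNReal.ofReal (|(k:ℝ)| ^ (2*θ)) *
      (ENNReal.ofReal (2 ^ θ * |(k:ℝ)| ^ (-θ)) * ENNReal.ofReal (2 ^ θ * |(k:ℝ)| ^ (-θ))) =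
      ENNReal.ofReal ((2:ℝ) ^ (2*θ)) := by
    rw [← ENNReal.ofReal_mul (by positivity), ← ENNReal.ofReal_mul (by positivity), habs1]
  have eqB : ENNReal.ofReal (|(k:ℝ)| ^ (2*θ)) *
      (ENNReal.ofReal ((2:ℝ) ^ θ) * ENNReal.ofReal (2 ^ (2*θ) * |(k:ℝ)| ^ (-(2*θ)))) =
      ENNReal.ofReal ((2:ℝ) ^ (3*θ)) := by
    rw [← ENNReal.ofReal_mul (by positivity), ← ENNReal.ofReal_mul (by positivity), habs2]
  -- main bound in ℝ≥0∞
  set T : ℝ≥0∞ := ∑' p : ℤ × ℤ, ENNReal.ofReal (F p) with hTdef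
  have hmain : ENNReal.ofReal (|(k:ℝ)| ^ (2*α+2*θ)) * T ≤ C' := by
    have h0 : ENNReal.ofReal (|(k:ℝ)| ^ (2*α+2*θ)) * T =
        ∑' p : ℤ × ℤ, ENNReal.ofReal (|(k:ℝ)| ^ (2*α+2*θ) * F p) := by
      rw [hTdef, ← ENNReal.tsum_mul_left]
      congr 1
      funext p
      rw [ENNReal.ofReal_mul (by positivity)]
    rw [h0]
    calc (∑' p : ℤ × ℤ, ENNReal.ofReal (|(k:ℝ)| ^ (2*α+2*θ) * F p))
        ≤ ∑' p : ℤ × ℤ, ENNReal.ofReal (3 ^ (2*α)) *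
            (ENNReal.ofReal (|(k:ℝ)| ^ (2*θ)) * (T1 p + T2 p + T3 p)) :=
          ENNReal.tsum_le_tsum E1
      _ = ENNReal.ofReal (3 ^ (2*α)) * (ENNReal.ofReal (|(k:ℝ)| ^ (2*θ)) *
            ((∑' p, T1 p) + (∑' p, T2 p) + ∑' p, T3 p)) := by
          rw [ENNReal.tsum_mul_left, ENNReal.tsum_mul_left, ENNReal.tsum_add, ENNReal.tsum_add]
      _ ≤ ENNReal.ofReal (3 ^ (2*α)) * (ENNReal.ofReal (|(k:ℝ)| ^ (2*θ)) *
            ((ENNReal.ofReal (2 ^ θ * |(k:ℝ)| ^ (-θ)) * K) *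
              (ENNReal.ofReal (2 ^ θ * |(k:ℝ)| ^ (-θ)) * K) +
            (ENNReal.ofReal (2 ^ θ) * (ENNReal.ofReal (2 ^ (2*θ) * |(k:ℝ)| ^ (-(2*θ))) * K * K)) +
            ENNReal.ofReal (2 ^ θ) * (ENNReal.ofReal (2 ^ (2*θ) * |(k:ℝ)| ^ (-(2*θ))) * K * K))) := by
          refine mul_le_mul_right (mul_le_mul_right ?_ _) _
          exact add_le_add (add_le_add hsT1 (by rw [hsT2]; exact hsT3)) hsT3
      _ = ENNReal.ofReal (3 ^ (2*α)) *
            ((ENNReal.ofReal (|(k:ℝ)| ^ (2*θ)) *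
              (ENNReal.ofReal (2 ^ θ * |(k:ℝ)| ^ (-θ)) * ENNReal.ofReal (2 ^ θ * |(k:ℝ)| ^ (-θ)))) *
                (K * K) +
            2 * ((ENNReal.ofReal (|(k:ℝ)| ^ (2*θ)) *
              (ENNReal.ofReal ((2:ℝ) ^ θ) * ENNReal.ofReal (2 ^ (2*θ) * |(k:ℝ)| ^ (-(2*θ))))) *
                (K * K))) := by
          ring
      _ = C' := by
          rw [eqA, eqB, hC]
          ring
  have h1le : (1:ℝ≥0∞) ≤ ENNReal.ofReal (|(k:ℝ)| ^ (2*α+2*θ)) := by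
    rw [← ENNReal.ofReal_one]
    exact ENNReal.ofReal_le_ofReal (Real.one_le_rpow hk1 (by linarith))
  have hTle : T ≤ C' := le_trans (le_mul_of_one_le_left zero_le h1le) hmain
  have hTtop : T ≠ ⊤ := (hTle.trans_lt hCtop.lt_top).ne
  -- summability
  have hofReal : ∀ p : ℤ × ℤ, ENNReal.ofReal (F p) = ((F p).toNNReal : ℝ≥0∞) := fun p => rfl
  have hsumN : Summable (fun p : ℤ × ℤ => (F p).toNNReal) := by
    rw [← ENNReal.tsum_coe_ne_top_iff_summable]
    simpa only [← hofReal, ← hTdef] using hTtop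
  have hsumF : Summable F :=
    (NNReal.summable_coe.2 hsumN).congr (fun p => Real.coe_toNNReal _ (hFnn p))
  refine ⟨hsumF, ?_⟩
  have htsum : (∑' p : ℤ × ℤ, F p) = T.toReal := by
    have h1 : (∑' p : ℤ × ℤ, F p) = ∑' p : ℤ × ℤ, ((F p).toNNReal : ℝ) :=
      tsum_congr fun p => (Real.coe_toNNReal _ (hFnn p)).symm
    have h2 : T = (((∑' p : ℤ × ℤ, (F p).toNNReal) : ℝ≥0) : ℝ≥0∞) := by
      rw [hTdef]
      rw [ENNReal.coe_tsum hsumN]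
      exact tsum_congr hofReal
    rw [h1, ← NNReal.coe_tsum, h2, ENNReal.coe_toReal]
  have hcast : ((|k| : ℤ) : ℝ) = |(k:ℝ)| := by push_cast; rfl
  rw [hcast, htsum]
  calc |(k:ℝ)| ^ (2*α+2*θ) * T.toReal
      = (ENNReal.ofReal (|(k:ℝ)| ^ (2*α+2*θ)) * T).toReal := by
        rw [ENNReal.toReal_mul, ENNReal.toReal_ofReal (by positivity)]
    _ ≤ C'.toReal := ENNReal.toReal_mono hCtop hmain
end

section
/- 2D convolution integral bound J₂: for α>1/2 and ρ>1/2, sup_{ξ∈ℝ²} ∫_{ℝ²}∫_{ℝ²} (1+2|⟨ξ₁−ξ₂, ξ−ξ₂⟩|)^{−2ρ} (1+|ξ₂|²)^{−α} (1+|ξ₁|²)^{−α} dξ₁ dξ₂ < ∞. -/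
open MeasureTheory Set
open scoped ENNReal

local notation "E2" => EuclideanSpace ℝ (Fin 2)



lemma contG (ρ : ℝ) (f : ℝ → ℝ) (hf : Continuous f) :
    Continuous fun t : ℝ => ENNReal.ofReal ((1 + 2*|f t|) ^ (-(2*ρ))) := by
  apply ENNReal.continuous_ofReal.comp
  apply Continuous.rpow_const (by fun_prop)
  intro x; left; positivity

lemma lemA (ρ c a : ℝ) (hc : 0 < c) :
    ∫⁻ t : ℝ, ENNReal.ofReal ((1 + 2*|c*t - a|) ^ (-(2*ρ)))
      = ENNReal.ofReal c⁻¹ * ∫⁻ u : ℝ, ENNReal.ofReal ((1 + 2*|u|) ^ (-(2*ρ))) := by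
  calc ∫⁻ t : ℝ, ENNReal.ofReal ((1 + 2*|c*t - a|) ^ (-(2*ρ)))
      = ∫⁻ t : ℝ, (fun s : ℝ => ENNReal.ofReal ((1 + 2*|s - a|) ^ (-(2*ρ)))) (c * t) := rfl
    _ = ENNReal.ofReal c⁻¹ * ∫⁻ s : ℝ, ENNReal.ofReal ((1 + 2*|s - a|) ^ (-(2*ρ))) := by
        rw [← lintegral_map ((contG ρ (fun s => s - a) (by fun_prop)).measurable)
          (measurable_const_mul c), Real.map_volume_mul_left hc.ne',
          lintegral_smul_measure, abs_of_nonneg (inv_nonneg.mpr hc.le), smul_eq_mul]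
    _ = ENNReal.ofReal c⁻¹ * ∫⁻ u : ℝ, ENNReal.ofReal ((1 + 2*|u|) ^ (-(2*ρ))) := by
        congr 1
        simp_rw [sub_eq_add_neg]
        exact lintegral_add_right_eq_self (fun u : ℝ => ENNReal.ofReal ((1 + 2*|u|) ^ (-(2*ρ)))) (-a)

lemma contD (α ρ : ℝ) (ξ ξ₂ : E2) :
    Continuous fun ξ₁ : E2 => ENNReal.ofReal
      ((1 + 2 * |(inner ℝ (ξ₁ - ξ₂) (ξ - ξ₂) : ℝ)|) ^ (-(2 * ρ)) * (1 + ‖ξ₁‖ ^ 2) ^ (-α)) := by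
  have hin : Continuous fun ξ₁ : E2 => (inner ℝ (ξ₁ - ξ₂) (ξ - ξ₂) : ℝ) :=
    (continuous_id.sub continuous_const).inner continuous_const
  apply ENNReal.continuous_ofReal.comp
  apply Continuous.mul
  · apply Continuous.rpow_const
    · exact continuous_const.add (continuous_const.mul (continuous_abs.comp hin))
    · intro x; left; positivity
  · apply Continuous.rpow_const (by fun_prop)
    intro x; left; positivity

lemma lemD (α ρ : ℝ) (hα : 0 < α) (ξ ξ₂ : E2) (hne : ξ₂ ≠ ξ) :
    ∫⁻ ξ₁ : E2, ENNReal.ofReal ((1 + 2 * |(inner ℝ (ξ₁ - ξ₂) (ξ - ξ₂) : ℝ)|) ^ (-(2 * ρ)) *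
        (1 + ‖ξ₁‖ ^ 2) ^ (-α))
      ≤ ENNReal.ofReal ‖ξ - ξ₂‖⁻¹ *
        ((∫⁻ u : ℝ, ENNReal.ofReal ((1 + 2*|u|) ^ (-(2*ρ)))) *
         (∫⁻ s : ℝ, ENNReal.ofReal ((1 + s^2) ^ (-α)))) := by
  set q : E2 := ξ - ξ₂ with hqdef
  have hq : q ≠ 0 := sub_ne_zero.mpr (Ne.symm hne)
  set c : ℝ := ‖q‖ with hcdef
  have hc : 0 < c := norm_pos_iff.mpr hq
  set v : E2 := c • (EuclideanSpace.single (0 : Fin 2) (1:ℝ)) with hvdef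
  have hv : ‖v‖ = ‖q‖ := by
    rw [hvdef, norm_smul, EuclideanSpace.norm_single, norm_one, norm_norm, mul_one]
  set T := Submodule.reflection (ℝ ∙ (v - q))ᗮ with hTdef
  have hTv : T v = q := Submodule.reflection_sub hv
  set a : ℝ := inner ℝ ξ₂ q with hadef
  rw [← (T.measurePreserving).lintegral_comp (contD α ρ ξ ξ₂).measurable]
  have key : ∀ η : E2, (inner ℝ (T η - ξ₂) q : ℝ) = c * η 0 - a := by
    intro η
    rw [inner_sub_left, ← hTv, T.inner_map_map, hTv, hvdef, real_inner_smul_right]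
    have h0 : (inner ℝ η (EuclideanSpace.single (0 : Fin 2) (1:ℝ)) : ℝ) = η 0 := by
      rw [EuclideanSpace.inner_single_right]; simp
    rw [h0]
  have mp := (volume_preserving_finTwoArrow ℝ).comp
    (PiLp.volume_preserving_ofLp (Fin 2))
  have hF : Measurable fun t : ℝ => ENNReal.ofReal ((1 + 2 * |c * t - a|) ^ (-(2 * ρ))) :=
    (contG ρ (fun t => c * t - a) (by fun_prop)).measurable
  have hG : Measurable fun s : ℝ => ENNReal.ofReal ((1 + s^2) ^ (-α)) := by
    apply (ENNReal.continuous_ofReal.comp _).measurable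
    apply Continuous.rpow_const (by fun_prop)
    intro x; left; positivity
  have hFG : Measurable fun p : ℝ × ℝ =>
      ENNReal.ofReal ((1 + 2 * |c * p.1 - a|) ^ (-(2 * ρ))) *
      ENNReal.ofReal ((1 + (p.2)^2) ^ (-α)) :=
    (hF.comp measurable_fst).mul (hG.comp measurable_snd)
  calc ∫⁻ η : E2, ENNReal.ofReal ((1 + 2 * |(inner ℝ (T η - ξ₂) q : ℝ)|) ^ (-(2 * ρ)) *
          (1 + ‖T η‖ ^ 2) ^ (-α))
      ≤ ∫⁻ η : E2, ENNReal.ofReal ((1 + 2 * |c * η 0 - a|) ^ (-(2 * ρ))) *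
          ENNReal.ofReal ((1 + (η 1)^2) ^ (-α)) := by
        refine lintegral_mono fun η => ?_
        dsimp only
        rw [key η, T.norm_map, ← ENNReal.ofReal_mul (by positivity)]
        apply ENNReal.ofReal_le_ofReal
        apply mul_le_mul_of_nonneg_left _ (by positivity)
        apply Real.rpow_le_rpow_of_nonpos (by positivity) _ (by linarith)
        have hns : ‖η‖ ^ 2 = (η 0)^2 + (η 1)^2 := by
          rw [EuclideanSpace.norm_eq, Real.sq_sqrt (by positivity)]
          simp [Fin.sum_univ_two, sq_abs]
        nlinarith [sq_nonneg (η 0)]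
    _ = ∫⁻ p : ℝ × ℝ, ENNReal.ofReal ((1 + 2 * |c * p.1 - a|) ^ (-(2 * ρ))) *
          ENNReal.ofReal ((1 + (p.2)^2) ^ (-α)) := mp.lintegral_comp hFG
    _ = (∫⁻ t : ℝ, ENNReal.ofReal ((1 + 2 * |c * t - a|) ^ (-(2 * ρ)))) *
          (∫⁻ s : ℝ, ENNReal.ofReal ((1 + s^2) ^ (-α))) := by
        rw [Measure.volume_eq_prod, lintegral_prod_mul hF.aemeasurable hG.aemeasurable]
    _ ≤ ENNReal.ofReal ‖ξ - ξ₂‖⁻¹ *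
        ((∫⁻ u : ℝ, ENNReal.ofReal ((1 + 2*|u|) ^ (-(2*ρ)))) *
         (∫⁻ s : ℝ, ENNReal.ofReal ((1 + s^2) ^ (-α)))) := by
        rw [lemA ρ c a hc, mul_assoc]

lemma lemB (ρ : ℝ) (hρ : 1/2 < ρ) :
    ∫⁻ u : ℝ, ENNReal.ofReal ((1 + 2*|u|) ^ (-(2*ρ))) < ⊤ := by
  have hint : Integrable (fun u : ℝ => (1 + ‖u‖) ^ (-(2*ρ))) := by
    apply integrable_one_add_norm
    rw [Module.finrank_self]; norm_num; linarith
  calc ∫⁻ u : ℝ, ENNReal.ofReal ((1 + 2*|u|) ^ (-(2*ρ)))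
      ≤ ∫⁻ u : ℝ, ENNReal.ofReal ((1 + ‖u‖) ^ (-(2*ρ))) := by
        apply lintegral_mono; intro u
        apply ENNReal.ofReal_le_ofReal
        apply Real.rpow_le_rpow_of_nonpos (by positivity)
        · rw [Real.norm_eq_abs]; linarith [abs_nonneg u]
        · linarith
    _ < ⊤ := hint.lintegral_lt_top

lemma lemC (α : ℝ) (hα : 1/2 < α) :
    ∫⁻ s : ℝ, ENNReal.ofReal ((1 + s^2) ^ (-α)) < ⊤ := by
  have hint : Integrable (fun s : ℝ => ((1:ℝ) + ‖s‖^2) ^ (-(2*α)/2)) := by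
    apply integrable_rpow_neg_one_add_norm_sq
    rw [Module.finrank_self]; norm_num; linarith
  have : ∀ s : ℝ, ((1:ℝ) + ‖s‖^2) ^ (-(2*α)/2) = (1 + s^2) ^ (-α) := by
    intro s; rw [Real.norm_eq_abs, sq_abs]; ring_nf
  simp_rw [← this]
  exact hint.lintegral_lt_top




lemma lemF : ∫⁻ y in Metric.ball (0:E2) 1, ENNReal.ofReal ‖y‖⁻¹ < ⊤ := by
  set μ := volume.restrict (Metric.ball (0:E2) 1) with hμ
  have hlc := lintegral_eq_lintegral_meas_lt μ (f := fun y : E2 => ‖y‖⁻¹)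
    (Filter.Eventually.of_forall fun y => by positivity)
    (measurable_norm.inv.aemeasurable)
  rw [hlc]
  have hsplit : Ioi (0:ℝ) = Ioc 0 1 ∪ Ioi 1 := (Ioc_union_Ioi_eq_Ioi zero_le_one).symm
  rw [hsplit, lintegral_union measurableSet_Ioi Ioc_disjoint_Ioi_same]
  have hball : volume (Metric.ball (0:E2) 1) < ⊤ := measure_ball_lt_top
  apply ENNReal.add_lt_top.mpr
  constructor
  · calc ∫⁻ t in Ioc (0:ℝ) 1, μ {y : E2 | t < ‖y‖⁻¹}
        ≤ ∫⁻ _ in Ioc (0:ℝ) 1, volume (Metric.ball (0:E2) 1) := by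
          apply setLIntegral_mono' measurableSet_Ioc
          intro t _
          calc μ {y : E2 | t < ‖y‖⁻¹} ≤ μ univ := measure_mono (subset_univ _)
            _ = volume (Metric.ball (0:E2) 1) := by
                rw [hμ, Measure.restrict_apply_univ]
      _ = volume (Metric.ball (0:E2) 1) * volume (Ioc (0:ℝ) 1) := by
          rw [setLIntegral_const]
      _ < ⊤ := by
          apply ENNReal.mul_lt_top hball
          simp [Real.volume_Ioc]
  · have hV : ∀ r : ℝ, volume (Metric.ball (0:E2) r)
        = ENNReal.ofReal r ^ 2 * ENNReal.ofReal (Real.sqrt Real.pi ^ 2 / Real.Gamma (2 / 2 + 1)) := by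
      intro r
      rw [EuclideanSpace.volume_ball]
      norm_num
    set V : ℝ≥0∞ := ENNReal.ofReal (Real.sqrt Real.pi ^ 2 / Real.Gamma (2 / 2 + 1)) with hVdef
    calc ∫⁻ t in Ioi (1:ℝ), μ {y : E2 | t < ‖y‖⁻¹}
        ≤ ∫⁻ t in Ioi (1:ℝ), ENNReal.ofReal ((t^2)⁻¹) * V := by
          apply setLIntegral_mono' measurableSet_Ioi
          intro t ht
          have ht1 : (1:ℝ) < t := ht
          have ht0 : (0:ℝ) < t := by linarith
          have hsub : {y : E2 | t < ‖y‖⁻¹} ⊆ Metric.ball (0:E2) t⁻¹ := by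
            intro y hy
            simp only [mem_setOf_eq] at hy
            have hy0 : (0:ℝ) < ‖y‖⁻¹ := lt_trans ht0 hy
            have hyn : 0 < ‖y‖ := by
              by_contra h
              push_neg at h
              have : ‖y‖ = 0 := le_antisymm h (norm_nonneg _)
              rw [this] at hy0; simp at hy0
            have : ‖y‖ < t⁻¹ := by
              rw [inv_eq_one_div, lt_div_iff₀ ht0]
              have := mul_lt_mul_of_pos_right hy hyn
              rw [inv_mul_cancel₀ hyn.ne'] at this; linarith [mul_comm t ‖y‖]
            simpa [Metric.mem_ball, dist_zero_right] using this
          calc μ {y : E2 | t < ‖y‖⁻¹} ≤ volume {y : E2 | t < ‖y‖⁻¹} :=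
                Measure.restrict_le_self _
            _ ≤ volume (Metric.ball (0:E2) t⁻¹) := measure_mono hsub
            _ = ENNReal.ofReal ((t^2)⁻¹) * V := by
                rw [hV t⁻¹, ← ENNReal.ofReal_pow (by positivity), inv_pow]
      _ = (∫⁻ t in Ioi (1:ℝ), ENNReal.ofReal ((t^2)⁻¹)) * V := by
          rw [lintegral_mul_const'']
          exact ((measurable_id.pow_const 2).inv.ennreal_ofReal).aemeasurable
      _ < ⊤ := by
          apply ENNReal.mul_lt_top _ ENNReal.ofReal_lt_top
          have hint : IntegrableOn (fun t : ℝ => (t^2)⁻¹) (Ioi 1) := by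
            have h2 : IntegrableOn (fun t : ℝ => t ^ (-2:ℝ)) (Ioi 1) :=
              integrableOn_Ioi_rpow_of_lt (by norm_num) one_pos
            apply h2.congr_fun _ measurableSet_Ioi
            intro t ht
            have ht0 : (0:ℝ) < t := lt_trans one_pos ht
            show t ^ (-2:ℝ) = (t^2)⁻¹
            rw [Real.rpow_neg ht0.le, ← Real.rpow_natCast t 2]
            norm_num
          exact hint.setLIntegral_lt_top





lemma finrankE2 : Module.finrank ℝ (EuclideanSpace ℝ (Fin 2)) = 2 := by
  simp [finrank_euclideanSpace]

lemma lemE (α : ℝ) (hα : 1/2 < α) : ∃ C2 : ℝ≥0∞, C2 < ⊤ ∧ ∀ ξ : E2,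
    ∫⁻ ξ₂ : E2, ENNReal.ofReal ((1+‖ξ₂‖^2)^(-α)) * ENNReal.ofReal ‖ξ - ξ₂‖⁻¹ ≤ C2 := by
  have hα0 : 0 < α := by linarith
  obtain ⟨p, hpdef⟩ : ∃ p : ℝ, p = 1/(2*α) + 1 := ⟨_, rfl⟩
  have hp1 : 1 < p := by
    have : 0 < 1/(2*α) := by positivity
    linarith [hpdef]
  have hp2 : p < 2 := by
    have h1 : 1/(2*α) < 1 := by
      rw [div_lt_one (by linarith)]; linarith
    linarith
  have hαp : 1 < α * p := by
    have : α * p = 1/2 + α := by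
      rw [hpdef, mul_add, mul_one]; congr 1; field_simp
    linarith
  obtain ⟨q, hqdef⟩ : ∃ q : ℝ, q = Real.conjExponent p := ⟨_, rfl⟩
  have hpq : p.HolderConjugate q := hqdef ▸ Real.HolderConjugate.conjExponent hp1
  have hq2 : 2 < q := by
    rw [hqdef, Real.conjExponent, lt_div_iff₀ (by linarith)]
    linarith
  -- constants
  have hK1 : ∫⁻ x : E2, ENNReal.ofReal ((1+‖x‖^2)^(-(α*p))) < ⊤ := by
    have hint : Integrable (fun x : E2 => ((1:ℝ) + ‖x‖^2) ^ (-(2*(α*p))/2)) := by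
      apply integrable_rpow_neg_one_add_norm_sq
      rw [finrankE2]; push_cast; linarith
    have he : ∀ x : E2, ((1:ℝ) + ‖x‖^2) ^ (-(2*(α*p))/2) = (1+‖x‖^2)^(-(α*p)) := by
      intro x; ring_nf
    simp_rw [← he]
    exact hint.lintegral_lt_top
  have hK2 : ∫⁻ x : E2, ENNReal.ofReal ((1+‖x‖)^(-q)) < ⊤ := by
    have hint : Integrable (fun x : E2 => ((1:ℝ) + ‖x‖) ^ (-q)) := by
      apply integrable_one_add_norm
      rw [finrankE2]; push_cast; linarith
    exact hint.lintegral_lt_top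
  refine ⟨(∫⁻ y in Metric.ball (0:E2) 1, ENNReal.ofReal ‖y‖⁻¹) +
    ((∫⁻ x : E2, ENNReal.ofReal ((1+‖x‖^2)^(-(α*p)))) +
      ENNReal.ofReal (2^q) * (∫⁻ x : E2, ENNReal.ofReal ((1+‖x‖)^(-q)))), ?_, ?_⟩
  · apply ENNReal.add_lt_top.mpr
    exact ⟨lemF, ENNReal.add_lt_top.mpr ⟨hK1, ENNReal.mul_lt_top ENNReal.ofReal_lt_top hK2⟩⟩
  intro ξ
  rw [← lintegral_add_compl (μ := volume)
    (fun ξ₂ : E2 => ENNReal.ofReal ((1+‖ξ₂‖^2)^(-α)) * ENNReal.ofReal ‖ξ - ξ₂‖⁻¹)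
    (measurableSet_ball (x := ξ) (ε := 1))]
  apply add_le_add
  · -- near part
    have hmp : MeasurePreserving (fun y : E2 => ξ - y) := Measure.measurePreserving_sub_left volume ξ
    have hemb : MeasurableEmbedding (fun y : E2 => ξ - y) :=
      (MeasurableEquiv.subLeft ξ).measurableEmbedding
    have hpre : (fun y : E2 => ξ - y) ⁻¹' (Metric.ball ξ 1) = Metric.ball (0:E2) 1 := by
      ext y
      simp [Metric.mem_ball, dist_eq_norm, sub_sub_cancel_left]
    calc ∫⁻ ξ₂ in Metric.ball ξ 1,
          ENNReal.ofReal ((1+‖ξ₂‖^2)^(-α)) * ENNReal.ofReal ‖ξ - ξ₂‖⁻¹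
        ≤ ∫⁻ ξ₂ in Metric.ball ξ 1, ENNReal.ofReal ‖ξ - ξ₂‖⁻¹ := by
          apply setLIntegral_mono' measurableSet_ball
          intro ξ₂ _
          apply mul_le_of_le_one_left (by positivity)
          apply ENNReal.ofReal_le_one.mpr
          apply Real.rpow_le_one_of_one_le_of_nonpos
          · nlinarith [norm_nonneg ξ₂, sq_nonneg ‖ξ₂‖]
          · linarith
      _ = ∫⁻ y in Metric.ball (0:E2) 1, ENNReal.ofReal ‖y‖⁻¹ := by
          rw [← hmp.setLIntegral_comp_preimage_emb hemb
            (fun z : E2 => ENNReal.ofReal ‖ξ - z‖⁻¹) (Metric.ball ξ 1), hpre]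
          simp_rw [sub_sub_cancel]
  · -- far part
    have hcont1 : Continuous fun ξ₂ : E2 => ENNReal.ofReal ((1+‖ξ₂‖^2)^(-(α*p))) := by
      apply ENNReal.continuous_ofReal.comp
      apply Continuous.rpow_const (by fun_prop)
      intro x; left; positivity
    have hcont2 : Continuous fun y : E2 => ENNReal.ofReal ((1+‖y‖)^(-q)) := by
      apply ENNReal.continuous_ofReal.comp
      apply Continuous.rpow_const (by fun_prop)
      intro x; left; positivity
    calc ∫⁻ ξ₂ in (Metric.ball ξ 1)ᶜ,
          ENNReal.ofReal ((1+‖ξ₂‖^2)^(-α)) * ENNReal.ofReal ‖ξ - ξ₂‖⁻¹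
        ≤ ∫⁻ ξ₂ in (Metric.ball ξ 1)ᶜ,
            (ENNReal.ofReal ((1+‖ξ₂‖^2)^(-(α*p))) +
             ENNReal.ofReal (2^q) * ENNReal.ofReal ((1+‖ξ - ξ₂‖)^(-q))) := by
          apply setLIntegral_mono' measurableSet_ball.compl
          intro ξ₂ hξ₂
          have hn : 1 ≤ ‖ξ - ξ₂‖ := by
            simp only [mem_compl_iff, Metric.mem_ball, not_lt] at hξ₂
            calc (1:ℝ) ≤ dist ξ₂ ξ := hξ₂
              _ = ‖ξ - ξ₂‖ := by rw [dist_eq_norm, norm_sub_rev]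
          have hn0 : (0:ℝ) < ‖ξ - ξ₂‖ := by linarith
          set A : ℝ := (1+‖ξ₂‖^2)^(-α) with hA
          set n : ℝ := ‖ξ - ξ₂‖ with hndef
          have hA0 : 0 ≤ A := Real.rpow_nonneg (by positivity) _
          have hyoung : A * n⁻¹ ≤ A^p + (n⁻¹)^q := by
            calc A * n⁻¹ ≤ A^p/p + (n⁻¹)^q/q :=
                Real.young_inequality_of_nonneg hA0 (by positivity) hpq
              _ ≤ A^p + (n⁻¹)^q := by
                apply add_le_add
                · exact div_le_self (Real.rpow_nonneg hA0 _) hpq.lt.le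
                · exact div_le_self (Real.rpow_nonneg (by positivity) _) (Real.HolderConjugate.symm hpq).lt.le
          have hAp : A^p = (1+‖ξ₂‖^2)^(-(α*p)) := by
            rw [hA, ← Real.rpow_mul (by positivity)]
            ring_nf
          have hBq : (n⁻¹)^q ≤ 2^q * (1+n)^(-q) := by
            have h1 : (n⁻¹)^q = n^(-q) := by
              rw [← Real.rpow_neg_one n, ← Real.rpow_mul hn0.le]
              ring_nf
            have h2 : (2*n)^(-q) = 2^(-q) * n^(-q) :=
              Real.mul_rpow (by norm_num) hn0.le
            have h3 : (2*n)^(-q) ≤ (1+n)^(-q) := by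
              apply Real.rpow_le_rpow_of_nonpos (by linarith) (by linarith) (by linarith)
            calc (n⁻¹)^q = n^(-q) := h1
              _ = 2^q * (2^(-q) * n^(-q)) := by
                  rw [← mul_assoc, ← Real.rpow_add (by norm_num : (0:ℝ) < 2)]
                  norm_num
              _ = 2^q * (2*n)^(-q) := by rw [h2]
              _ ≤ 2^q * (1+n)^(-q) := by
                  apply mul_le_mul_of_nonneg_left h3 (by positivity)
          calc ENNReal.ofReal A * ENNReal.ofReal n⁻¹
              = ENNReal.ofReal (A * n⁻¹) := (ENNReal.ofReal_mul hA0).symm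
            _ ≤ ENNReal.ofReal (A^p + (n⁻¹)^q) := ENNReal.ofReal_le_ofReal hyoung
            _ ≤ ENNReal.ofReal (A^p) + ENNReal.ofReal ((n⁻¹)^q) := ENNReal.ofReal_add_le
            _ ≤ ENNReal.ofReal ((1+‖ξ₂‖^2)^(-(α*p))) +
                ENNReal.ofReal (2^q) * ENNReal.ofReal ((1+n)^(-q)) := by
                apply add_le_add
                · rw [hAp]
                · calc ENNReal.ofReal ((n⁻¹)^q) ≤ ENNReal.ofReal (2^q * (1+n)^(-q)) :=
                      ENNReal.ofReal_le_ofReal hBq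
                    _ = ENNReal.ofReal (2^q) * ENNReal.ofReal ((1+n)^(-q)) :=
                      ENNReal.ofReal_mul (by positivity)
      _ ≤ ∫⁻ ξ₂ : E2,
            (ENNReal.ofReal ((1+‖ξ₂‖^2)^(-(α*p))) +
             ENNReal.ofReal (2^q) * ENNReal.ofReal ((1+‖ξ - ξ₂‖)^(-q))) :=
          setLIntegral_le_lintegral _ _
      _ = (∫⁻ x : E2, ENNReal.ofReal ((1+‖x‖^2)^(-(α*p)))) +
          ENNReal.ofReal (2^q) * (∫⁻ x : E2, ENNReal.ofReal ((1+‖x‖)^(-q))) := by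
          rw [lintegral_add_left hcont1.measurable]
          congr 1
          rw [lintegral_const_mul' _ _ ENNReal.ofReal_ne_top]
          congr 1
          have hmp : MeasurePreserving (fun y : E2 => ξ - y) := Measure.measurePreserving_sub_left volume ξ
          exact hmp.lintegral_comp hcont2.measurable


/-- 2D convolution integral bound `J₂`: for `α > 1/2` and
`ρ > 1/2`,
`sup_ξ ∫∫ (1+2|⟨ξ₁-ξ₂, ξ-ξ₂⟩|)^{-2ρ} (1+|ξ₂|²)^{-α} (1+|ξ₁|²)^{-α} dξ₁ dξ₂`
is finite. -/
theorem stmt_14 (α ρ : ℝ) (hα : 1/2 < α) (hρ : 1/2 < ρ) :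
    ∃ C : ℝ≥0∞, C < ⊤ ∧ ∀ ξ : EuclideanSpace ℝ (Fin 2),
      (∫⁻ p : EuclideanSpace ℝ (Fin 2) × EuclideanSpace ℝ (Fin 2),
        ENNReal.ofReal ((1 + 2 * |(inner ℝ (p.1 - p.2) (ξ - p.2) : ℝ)|) ^ (-(2 * ρ)) *
          (1 + ‖p.2‖ ^ 2) ^ (-α) * (1 + ‖p.1‖ ^ 2) ^ (-α))) ≤ C := by
  obtain ⟨C2, hC2, hbound⟩ := lemE α hα
  have hα0 : 0 < α := by linarith
  set Iρ : ℝ≥0∞ := ∫⁻ u : ℝ, ENNReal.ofReal ((1 + 2*|u|) ^ (-(2*ρ))) with hIρ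
  set Cα : ℝ≥0∞ := ∫⁻ s : ℝ, ENNReal.ofReal ((1 + s^2) ^ (-α)) with hCα
  have hIρt : Iρ < ⊤ := lemB ρ hρ
  have hCαt : Cα < ⊤ := lemC α hα
  refine ⟨Iρ * Cα * C2, by
    exact ENNReal.mul_lt_top (ENNReal.mul_lt_top hIρt hCαt) hC2, ?_⟩
  intro ξ
  have hcont : Continuous fun p : E2 × E2 =>
      ENNReal.ofReal ((1 + 2 * |(inner ℝ (p.1 - p.2) (ξ - p.2) : ℝ)|) ^ (-(2 * ρ)) *
        (1 + ‖p.2‖ ^ 2) ^ (-α) * (1 + ‖p.1‖ ^ 2) ^ (-α)) := by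
    have hin : Continuous fun p : E2 × E2 => (inner ℝ (p.1 - p.2) (ξ - p.2) : ℝ) :=
      (continuous_fst.sub continuous_snd).inner (continuous_const.sub continuous_snd)
    apply ENNReal.continuous_ofReal.comp
    apply Continuous.mul
    apply Continuous.mul
    · apply Continuous.rpow_const
      · exact continuous_const.add (continuous_const.mul (continuous_abs.comp hin))
      · intro x; left; positivity
    · apply Continuous.rpow_const (by fun_prop)
      intro x; left; positivity
    · apply Continuous.rpow_const (by fun_prop)
      intro x; left; positivity
  rw [Measure.volume_eq_prod, lintegral_prod_symm _ hcont.measurable.aemeasurable]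
  -- now iterated : ∫⁻ ξ₂, ∫⁻ ξ₁
  have step1 : ∀ ξ₂ : E2,
      (∫⁻ ξ₁ : E2, ENNReal.ofReal ((1 + 2 * |(inner ℝ (ξ₁ - ξ₂) (ξ - ξ₂) : ℝ)|) ^ (-(2 * ρ)) *
        (1 + ‖ξ₂‖ ^ 2) ^ (-α) * (1 + ‖ξ₁‖ ^ 2) ^ (-α)))
      = ENNReal.ofReal ((1 + ‖ξ₂‖ ^ 2) ^ (-α)) *
        ∫⁻ ξ₁ : E2, ENNReal.ofReal ((1 + 2 * |(inner ℝ (ξ₁ - ξ₂) (ξ - ξ₂) : ℝ)|) ^ (-(2 * ρ)) *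
          (1 + ‖ξ₁‖ ^ 2) ^ (-α)) := by
    intro ξ₂
    rw [← lintegral_const_mul' _ _ ENNReal.ofReal_ne_top]
    apply lintegral_congr
    intro ξ₁
    rw [← ENNReal.ofReal_mul (by positivity)]
    congr 1
    ring
  simp_rw [step1]
  have hae : ∀ᵐ ξ₂ : E2, ENNReal.ofReal ((1 + ‖ξ₂‖ ^ 2) ^ (-α)) *
      (∫⁻ ξ₁ : E2, ENNReal.ofReal ((1 + 2 * |(inner ℝ (ξ₁ - ξ₂) (ξ - ξ₂) : ℝ)|) ^ (-(2 * ρ)) *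
        (1 + ‖ξ₁‖ ^ 2) ^ (-α)))
      ≤ (ENNReal.ofReal ((1 + ‖ξ₂‖ ^ 2) ^ (-α)) * ENNReal.ofReal ‖ξ - ξ₂‖⁻¹) * (Iρ * Cα) := by
    have hne : ∀ᵐ ξ₂ : E2, ξ₂ ≠ ξ := by
      rw [Filter.eventually_iff, mem_ae_iff]
      have : {ξ₂ : E2 | ξ₂ ≠ ξ}ᶜ = {ξ} := by
        ext x; simp
      rw [this]
      exact measure_singleton ξ
    filter_upwards [hne] with ξ₂ hξ₂
    rw [mul_assoc]
    exact mul_le_mul_right (lemD α ρ hα0 ξ ξ₂ hξ₂) _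
  calc ∫⁻ ξ₂ : E2, ENNReal.ofReal ((1 + ‖ξ₂‖ ^ 2) ^ (-α)) *
        ∫⁻ ξ₁ : E2, ENNReal.ofReal ((1 + 2 * |(inner ℝ (ξ₁ - ξ₂) (ξ - ξ₂) : ℝ)|) ^ (-(2 * ρ)) *
          (1 + ‖ξ₁‖ ^ 2) ^ (-α))
      ≤ ∫⁻ ξ₂ : E2, (ENNReal.ofReal ((1 + ‖ξ₂‖ ^ 2) ^ (-α)) * ENNReal.ofReal ‖ξ - ξ₂‖⁻¹) *
          (Iρ * Cα) := lintegral_mono_ae hae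
    _ = (∫⁻ ξ₂ : E2, ENNReal.ofReal ((1 + ‖ξ₂‖ ^ 2) ^ (-α)) * ENNReal.ofReal ‖ξ - ξ₂‖⁻¹) *
          (Iρ * Cα) := lintegral_mul_const' _ _ (by
            exact ENNReal.mul_ne_top hIρt.ne hCαt.ne)
    _ ≤ C2 * (Iρ * Cα) := mul_le_mul_left (hbound ξ) _
    _ = Iρ * Cα * C2 := by ring
end
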